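/- arXiv:1701.05318 — 8 statements merged into one kernel-verified Lean document; each statement's English description precedes it below -/
import Mathlib

section
/- Let ψ : ℝ → ℝ be a C^∞ function with ψ(0) = 0 such that ψ(y) = sin(7π/5) for every y ∈ [7π/15, 8π/15], and let α ∈ ℝ. Define φ : ℝ → ℝ by φ(x) = α·sin(3x) − (1/3)·∫₀ˣ sin(3(x−y))·ψ′(y) dy. Then for every x ∈ [7π/15, 8π/15], φ(x) = (α − (1/3)·cos(7π/5)·sin(7π/5) − ∫₀^{7π/15} sin(3y)·ψ(y) dy)·sin(3x) + ((1/3)·sin(7π/5)² − ∫₀^{7π/15} cos(3y)·ψ(y) dy)·cos(3x). -/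
open Real

/-- The variation-of-constants solution
`φ(x) = α·sin(3x) − (1/3)·∫₀ˣ sin(3(x−y))·ψ′(y) dy`. -/
noncomputable def phiSol (ψ : ℝ → ℝ) (α : ℝ) : ℝ → ℝ :=
  fun x => α * Real.sin (3 * x)
    - (1 / 3) * ∫ y in (0:ℝ)..x, Real.sin (3 * (x - y)) * deriv ψ y

private lemma hdsin (y : ℝ) : HasDerivAt (fun t => Real.sin (3*t)) (3 * Real.cos (3*y)) y := by
  have h := (Real.hasDerivAt_sin (3*y)).comp y ((hasDerivAt_id y).const_mul 3)
  rw [mul_comm]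
  simpa [Function.comp_def] using h

private lemma hdcos (y : ℝ) : HasDerivAt (fun t => Real.cos (3*t)) (-(3 * Real.sin (3*y))) y := by
  have h := (Real.hasDerivAt_cos (3*y)).comp y ((hasDerivAt_id y).const_mul 3)
  rw [show -(3 * Real.sin (3*y)) = -Real.sin (3*y) * 3 by ring]
  simpa [Function.comp_def] using h

theorem stmt_2 (ψ : ℝ → ℝ) (hψ : ContDiff ℝ (⊤ : ℕ∞) ψ) (hψ0 : ψ 0 = 0)
    (hconst : ∀ y ∈ Set.Icc (7 * π / 15) (8 * π / 15), ψ y = Real.sin (7 * π / 5))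
    (α : ℝ) :
    ∀ x ∈ Set.Icc (7 * π / 15) (8 * π / 15),
      phiSol ψ α x
        = (α - (1 / 3) * Real.cos (7 * π / 5) * Real.sin (7 * π / 5)
              - ∫ y in (0:ℝ)..(7 * π / 15), Real.sin (3 * y) * ψ y) * Real.sin (3 * x)
          + ((1 / 3) * Real.sin (7 * π / 5) ^ 2
              - ∫ y in (0:ℝ)..(7 * π / 15), Real.cos (3 * y) * ψ y) * Real.cos (3 * x) := by
  intro x hx
  set a : ℝ := 7 * π / 15 with ha
  set c : ℝ := Real.sin (7 * π / 5) with hc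
  have hψd : Differentiable ℝ ψ := hψ.differentiable (by simp)
  have hψ' : Continuous (deriv ψ) := (hψ.iterate_deriv 1).continuous
  have hψc : Continuous ψ := hψ.continuous
  have hsin3 : Continuous (fun y : ℝ => Real.sin (3*y)) := by fun_prop
  have hcos3 : Continuous (fun y : ℝ => Real.cos (3*y)) := by fun_prop
  -- expand sin(3(x-y))
  have hexp : (∫ y in (0:ℝ)..x, Real.sin (3 * (x - y)) * deriv ψ y)
      = Real.sin (3*x) * (∫ y in (0:ℝ)..x, Real.cos (3*y) * deriv ψ y)
        - Real.cos (3*x) * (∫ y in (0:ℝ)..x, Real.sin (3*y) * deriv ψ y) := by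
    have e1 : Real.sin (3*x) * (∫ y in (0:ℝ)..x, Real.cos (3*y) * deriv ψ y)
        = ∫ y in (0:ℝ)..x, Real.sin (3*x) * (Real.cos (3*y) * deriv ψ y) :=
      (intervalIntegral.integral_const_mul _ _).symm
    have e2 : Real.cos (3*x) * (∫ y in (0:ℝ)..x, Real.sin (3*y) * deriv ψ y)
        = ∫ y in (0:ℝ)..x, Real.cos (3*x) * (Real.sin (3*y) * deriv ψ y) :=
      (intervalIntegral.integral_const_mul _ _).symm
    rw [e1, e2, ← intervalIntegral.integral_sub
      (f := fun y => Real.sin (3*x) * (Real.cos (3*y) * deriv ψ y))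
      (g := fun y => Real.cos (3*x) * (Real.sin (3*y) * deriv ψ y))
      ((continuous_const.mul (hcos3.mul hψ')).intervalIntegrable _ _)
      ((continuous_const.mul (hsin3.mul hψ')).intervalIntegrable _ _)]
    refine intervalIntegral.integral_congr fun y _ => ?_
    have h3 : 3 * (x - y) = 3*x - 3*y := by ring
    rw [h3, Real.sin_sub]
    ring
  -- integration by parts
  have hIBP1 : (∫ y in (0:ℝ)..x, Real.cos (3*y) * deriv ψ y)
      = Real.cos (3*x) * ψ x + 3 * (∫ y in (0:ℝ)..x, Real.sin (3*y) * ψ y) := by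
    have h := intervalIntegral.integral_mul_deriv_eq_deriv_mul
      (u := fun y => Real.cos (3*y)) (v := ψ) (u' := fun y => -(3 * Real.sin (3*y)))
      (v' := deriv ψ) (a := (0:ℝ)) (b := x)
      (fun y _ => hdcos y) (fun y _ => (hψd y).hasDerivAt)
      (((continuous_const.mul hsin3).neg).intervalIntegrable _ _)
      (hψ'.intervalIntegrable _ _)
    rw [h, hψ0]
    have e : (∫ y in (0:ℝ)..x, -(3 * Real.sin (3*y)) * ψ y)
        = -(3 * (∫ y in (0:ℝ)..x, Real.sin (3*y) * ψ y)) := by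
      rw [← intervalIntegral.integral_const_mul, ← intervalIntegral.integral_neg]
      exact intervalIntegral.integral_congr fun y _ => by ring
    rw [e]
    ring
  have hIBP2 : (∫ y in (0:ℝ)..x, Real.sin (3*y) * deriv ψ y)
      = Real.sin (3*x) * ψ x - 3 * (∫ y in (0:ℝ)..x, Real.cos (3*y) * ψ y) := by
    have h := intervalIntegral.integral_mul_deriv_eq_deriv_mul
      (u := fun y => Real.sin (3*y)) (v := ψ) (u' := fun y => 3 * Real.cos (3*y))
      (v' := deriv ψ) (a := (0:ℝ)) (b := x)
      (fun y _ => hdsin y) (fun y _ => (hψd y).hasDerivAt)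
      ((continuous_const.mul hcos3).intervalIntegrable _ _)
      (hψ'.intervalIntegrable _ _)
    rw [h, hψ0]
    have e : (∫ y in (0:ℝ)..x, (3 * Real.cos (3*y)) * ψ y)
        = 3 * (∫ y in (0:ℝ)..x, Real.cos (3*y) * ψ y) := by
      rw [← intervalIntegral.integral_const_mul]
      exact intervalIntegral.integral_congr fun y _ => by ring
    rw [e]
    ring
  -- split integrals at a
  have hS : (∫ y in (0:ℝ)..x, Real.sin (3*y) * ψ y)
      = (∫ y in (0:ℝ)..a, Real.sin (3*y) * ψ y) + ∫ y in a..x, Real.sin (3*y) * ψ y :=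
    (intervalIntegral.integral_add_adjacent_intervals
      ((hsin3.mul hψc).intervalIntegrable _ _) ((hsin3.mul hψc).intervalIntegrable _ _)).symm
  have hC : (∫ y in (0:ℝ)..x, Real.cos (3*y) * ψ y)
      = (∫ y in (0:ℝ)..a, Real.cos (3*y) * ψ y) + ∫ y in a..x, Real.cos (3*y) * ψ y :=
    (intervalIntegral.integral_add_adjacent_intervals
      ((hcos3.mul hψc).intervalIntegrable _ _) ((hcos3.mul hψc).intervalIntegrable _ _)).symm
  -- on [a,x], ψ = c
  have hsub : Set.uIcc a x ⊆ Set.Icc (7 * π / 15) (8 * π / 15) := by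
    rw [Set.uIcc_of_le hx.1]
    exact Set.Icc_subset_Icc le_rfl hx.2
  have htail_sin : (∫ y in a..x, Real.sin (3*y) * ψ y)
      = c * (Real.cos (3*a) - Real.cos (3*x)) / 3 := by
    rw [show (∫ y in a..x, Real.sin (3*y) * ψ y) = ∫ y in a..x, Real.sin (3*y) * c from
      intervalIntegral.integral_congr fun y hy => by rw [hconst y (hsub hy)]]
    have hd : ∀ y ∈ Set.uIcc a x,
        HasDerivAt (fun t => -(Real.cos (3*t) * c) / 3) (Real.sin (3*y) * c) y := by
      intro y _
      have h : HasDerivAt (fun t => -(Real.cos (3*t) * c) / 3)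
          (-(-(3 * Real.sin (3*y)) * c) / 3) y := ((hdcos y).mul_const c).neg.div_const 3
      convert h using 1
      ring
    rw [intervalIntegral.integral_eq_sub_of_hasDerivAt hd
      ((hsin3.mul continuous_const).intervalIntegrable _ _)]
    ring
  have htail_cos : (∫ y in a..x, Real.cos (3*y) * ψ y)
      = c * (Real.sin (3*x) - Real.sin (3*a)) / 3 := by
    rw [show (∫ y in a..x, Real.cos (3*y) * ψ y) = ∫ y in a..x, Real.cos (3*y) * c from
      intervalIntegral.integral_congr fun y hy => by rw [hconst y (hsub hy)]]
    have hd : ∀ y ∈ Set.uIcc a x,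
        HasDerivAt (fun t => Real.sin (3*t) * c / 3) (Real.cos (3*y) * c) y := by
      intro y _
      have h : HasDerivAt (fun t => Real.sin (3*t) * c / 3)
          (3 * Real.cos (3*y) * c / 3) y := ((hdsin y).mul_const c).div_const 3
      convert h using 1
      ring
    rw [intervalIntegral.integral_eq_sub_of_hasDerivAt hd
      ((hcos3.mul continuous_const).intervalIntegrable _ _)]
    ring
  have hψx : ψ x = c := hconst x hx
  have h3a : 3 * a = 7 * π / 5 := by rw [ha]; ring
  have hcos3a : Real.cos (3*a) = Real.cos (7 * π / 5) := by rw [h3a]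
  have hsin3a : Real.sin (3*a) = c := by rw [h3a, hc]
  show α * Real.sin (3 * x)
      - (1 / 3) * (∫ y in (0:ℝ)..x, Real.sin (3 * (x - y)) * deriv ψ y) = _
  rw [hexp, hIBP1, hIBP2, hS, hC, htail_sin, htail_cos, hcos3a, hsin3a, hψx]
  ring
end

section
/- Let ψ : ℝ → ℝ be a C^∞ function with ψ(0) = 0 such that ψ(y) = sin(7π/5) for every y ∈ [7π/15, 8π/15], and suppose that ∫₀^{7π/15} cos(3y)·ψ(y) dy = (1/3)·sin(7π/5)². Set α := (1/3)·cos(7π/5)·sin(7π/5) + ∫₀^{7π/15} sin(3y)·ψ(y) dy and define φ : ℝ → ℝ by φ(x) = α·sin(3x) − (1/3)·∫₀ˣ sin(3(x−y))·ψ′(y) dy. Then φ(x) = 0 for every x ∈ [7π/15, 8π/15]. -/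
open Real

theorem stmt_5 (ψ : ℝ → ℝ) (hψ : ContDiff ℝ (⊤ : ℕ∞) ψ) (hψ0 : ψ 0 = 0)
    (hconst : ∀ y ∈ Set.Icc (7 * π / 15) (8 * π / 15), ψ y = Real.sin (7 * π / 5))
    (hint : (∫ y in (0:ℝ)..(7 * π / 15), Real.cos (3 * y) * ψ y)
      = (1 / 3) * Real.sin (7 * π / 5) ^ 2) :
    ∀ x ∈ Set.Icc (7 * π / 15) (8 * π / 15),
      phiSol ψ
        ((1 / 3) * Real.cos (7 * π / 5) * Real.sin (7 * π / 5)
          + ∫ y in (0:ℝ)..(7 * π / 15), Real.sin (3 * y) * ψ y) x = 0 := by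
  intro x hx
  obtain ⟨hax, hxb⟩ := hx
  have hψd : ∀ y : ℝ, HasDerivAt ψ (deriv ψ y) y := fun y =>
    ((hψ.differentiable (by simp)) y).hasDerivAt
  have hψc : Continuous ψ := hψ.continuous
  have hψ'c : Continuous (deriv ψ) := hψ.continuous_deriv (by exact_mod_cast le_top)
  have hu : ∀ y : ℝ, HasDerivAt (fun y => Real.sin (3 * (x - y)))
      (Real.cos (3 * (x - y)) * (-3)) y := by
    intro y
    have h1 : HasDerivAt (fun y : ℝ => 3 * (x - y)) (-3) y := by
      have := ((hasDerivAt_id y).const_sub x).const_mul 3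
      simpa using this
    exact h1.sin
  have hIBP : (∫ y in (0:ℝ)..x, Real.sin (3 * (x - y)) * deriv ψ y)
      = Real.sin (3 * (x - x)) * ψ x - Real.sin (3 * (x - 0)) * ψ 0
        - ∫ y in (0:ℝ)..x, (Real.cos (3 * (x - y)) * (-3)) * ψ y := by
    apply intervalIntegral.integral_mul_deriv_eq_deriv_mul
      (fun y _ => hu y) (fun y _ => hψd y)
    · exact (Continuous.intervalIntegrable (by fun_prop) _ _)
    · exact hψ'c.intervalIntegrable _ _
  have hexp : (∫ y in (0:ℝ)..x, (Real.cos (3 * (x - y)) * (-3)) * ψ y)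
      = -3 * (Real.cos (3 * x) * (∫ y in (0:ℝ)..x, Real.cos (3 * y) * ψ y)
        + Real.sin (3 * x) * (∫ y in (0:ℝ)..x, Real.sin (3 * y) * ψ y)) := by
    rw [← intervalIntegral.integral_const_mul, ← intervalIntegral.integral_const_mul,
        ← intervalIntegral.integral_add
          (Continuous.intervalIntegrable (by fun_prop) _ _)
          (Continuous.intervalIntegrable (by fun_prop) _ _),
        ← intervalIntegral.integral_const_mul]
    apply intervalIntegral.integral_congr
    intro y _
    have h3 : 3 * (x - y) = 3 * x - 3 * y := by ring
    simp only [h3, Real.cos_sub]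
    ring
  -- split the integrals at a = 7π/15
  have hsplitC : (∫ y in (0:ℝ)..x, Real.cos (3 * y) * ψ y)
      = (∫ y in (0:ℝ)..(7 * π / 15), Real.cos (3 * y) * ψ y)
        + ∫ y in (7 * π / 15)..x, Real.cos (3 * y) * ψ y := by
    rw [intervalIntegral.integral_add_adjacent_intervals
      (Continuous.intervalIntegrable (by fun_prop) _ _)
      (Continuous.intervalIntegrable (by fun_prop) _ _)]
  have hsplitS : (∫ y in (0:ℝ)..x, Real.sin (3 * y) * ψ y)
      = (∫ y in (0:ℝ)..(7 * π / 15), Real.sin (3 * y) * ψ y)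
        + ∫ y in (7 * π / 15)..x, Real.sin (3 * y) * ψ y := by
    rw [intervalIntegral.integral_add_adjacent_intervals
      (Continuous.intervalIntegrable (by fun_prop) _ _)
      (Continuous.intervalIntegrable (by fun_prop) _ _)]
  have hmem : ∀ y ∈ Set.uIcc (7 * π / 15) x, ψ y = Real.sin (7 * π / 5) := by
    intro y hy
    rw [Set.uIcc_of_le hax] at hy
    exact hconst y ⟨hy.1, le_trans hy.2 hxb⟩
  have h3a : 3 * (7 * π / 15) = 7 * π / 5 := by ring
  have htailC : (∫ y in (7 * π / 15)..x, Real.cos (3 * y) * ψ y)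
      = Real.sin (3 * x) * (Real.sin (7 * π / 5) / 3)
        - Real.sin (7 * π / 5) * (Real.sin (7 * π / 5) / 3) := by
    rw [intervalIntegral.integral_congr (g := fun y => Real.cos (3 * y) * Real.sin (7 * π / 5))
      (fun y hy => by rw [hmem y hy])]
    have : ∀ y ∈ Set.uIcc (7 * π / 15) x, HasDerivAt
        (fun y => Real.sin (3 * y) * (Real.sin (7 * π / 5) / 3))
        (Real.cos (3 * y) * Real.sin (7 * π / 5)) y := by
      intro y _
      have h1 : HasDerivAt (fun y : ℝ => 3 * y) 3 y := by
        simpa using (hasDerivAt_id y).const_mul 3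
      have := h1.sin.mul_const (Real.sin (7 * π / 5) / 3)
      exact this.congr_deriv (by ring)
    rw [intervalIntegral.integral_eq_sub_of_hasDerivAt this
      (Continuous.intervalIntegrable (by fun_prop) _ _)]
    rw [h3a]
  have htailS : (∫ y in (7 * π / 15)..x, Real.sin (3 * y) * ψ y)
      = (-Real.cos (3 * x)) * (Real.sin (7 * π / 5) / 3)
        - (-Real.cos (7 * π / 5)) * (Real.sin (7 * π / 5) / 3) := by
    rw [intervalIntegral.integral_congr (g := fun y => Real.sin (3 * y) * Real.sin (7 * π / 5))
      (fun y hy => by rw [hmem y hy])]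
    have : ∀ y ∈ Set.uIcc (7 * π / 15) x, HasDerivAt
        (fun y => (-Real.cos (3 * y)) * (Real.sin (7 * π / 5) / 3))
        (Real.sin (3 * y) * Real.sin (7 * π / 5)) y := by
      intro y _
      have h1 : HasDerivAt (fun y : ℝ => 3 * y) 3 y := by
        simpa using (hasDerivAt_id y).const_mul 3
      have := (h1.cos.neg).mul_const (Real.sin (7 * π / 5) / 3)
      exact this.congr_deriv (by ring)
    rw [intervalIntegral.integral_eq_sub_of_hasDerivAt this
      (Continuous.intervalIntegrable (by fun_prop) _ _)]
    rw [h3a]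
  simp only [phiSol, hIBP, hexp, hsplitC, hsplitS, htailC, htailS, hint, hψ0, sub_self,
    mul_zero, Real.sin_zero, sub_zero, zero_mul, zero_sub]
  ring
end

section
/- Let ψ : ℝ → ℝ be a C^∞ function and let V ⊂ ℝ be an open set containing every zero of ψ in [0, π], such that ψ(x) = sin(3x) for every x ∈ V ∩ [0, π]. Then there exists a C^∞ function a : ℝ → ℝ such that −ψ″(x) − a(x)·ψ(x) = 9·ψ(x) for every x ∈ [0, π], and moreover a(x) = 0 for every x ∈ V ∩ [0, π]. -/
open Real
open scoped Manifold

/-- If two functions differentiable at `x` agree on `V ∩ Icc 0 π` with `V` open and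
`x` in that set, then their derivatives agree at `x`. -/
lemma deriv_eq_of_eqOn_aux {f g : ℝ → ℝ} {V : Set ℝ} (hV : IsOpen V) {x : ℝ}
    (hx : x ∈ V ∩ Set.Icc (0:ℝ) π)
    (hf : DifferentiableAt ℝ f x) (hg : DifferentiableAt ℝ g x)
    (heq : ∀ y ∈ V ∩ Set.Icc (0:ℝ) π, f y = g y) :
    deriv f x = deriv g x := by
  have hmem : V ∩ Set.Icc (0:ℝ) π ∈ nhdsWithin x (Set.Icc (0:ℝ) π) :=
    Filter.inter_mem (mem_nhdsWithin_of_mem_nhds (hV.mem_nhds hx.1)) self_mem_nhdsWithin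
  have hEv : f =ᶠ[nhdsWithin x (Set.Icc (0:ℝ) π)] g :=
    Filter.eventuallyEq_of_mem hmem heq
  have h1 : HasDerivWithinAt f (deriv f x) (Set.Icc (0:ℝ) π) x :=
    hf.hasDerivAt.hasDerivWithinAt
  have h2 : HasDerivWithinAt g (deriv g x) (Set.Icc (0:ℝ) π) x :=
    hg.hasDerivAt.hasDerivWithinAt
  have h1' : HasDerivWithinAt g (deriv f x) (Set.Icc (0:ℝ) π) x :=
    h1.congr_of_eventuallyEq hEv.symm (heq x hx).symm
  have hu : UniqueDiffWithinAt ℝ (Set.Icc (0:ℝ) π) x :=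
    (uniqueDiffOn_Icc Real.pi_pos) x hx.2
  rw [← h1'.derivWithin hu, ← h2.derivWithin hu]

theorem stmt_7 (ψ : ℝ → ℝ) (hψ : ContDiff ℝ (⊤ : ℕ∞) ψ)
    (V : Set ℝ) (hV : IsOpen V)
    (hzeros : ∀ x ∈ Set.Icc (0:ℝ) π, ψ x = 0 → x ∈ V)
    (hsin : ∀ x ∈ V ∩ Set.Icc (0:ℝ) π, ψ x = Real.sin (3 * x)) :
    ∃ a : ℝ → ℝ, ContDiff ℝ (⊤ : ℕ∞) a ∧
      (∀ x ∈ Set.Icc (0:ℝ) π, -(deriv (deriv ψ) x) - a x * ψ x = 9 * ψ x) ∧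
      (∀ x ∈ V ∩ Set.Icc (0:ℝ) π, a x = 0) := by
  -- differentiability facts
  have hψ' : ContDiff ℝ (⊤ : ℕ∞) (deriv ψ) := (contDiff_infty_iff_deriv.mp hψ).2
  have hψ'' : ContDiff ℝ (⊤ : ℕ∞) (deriv (deriv ψ)) := (contDiff_infty_iff_deriv.mp hψ').2
  -- derivatives of sin (3x) and 3 cos (3x)
  have hds : ∀ x : ℝ, HasDerivAt (fun y => Real.sin (3 * y)) (3 * Real.cos (3 * x)) x := by
    intro x
    have h1 : HasDerivAt (fun y : ℝ => 3 * y) 3 x := by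
      simpa using (hasDerivAt_id x).const_mul (3:ℝ)
    have h2 := (Real.hasDerivAt_sin (3 * x)).comp x h1
    rw [mul_comm]
    exact h2
  have hdc : ∀ x : ℝ, HasDerivAt (fun y => 3 * Real.cos (3 * y)) (-(9 * Real.sin (3 * x))) x := by
    intro x
    have h1 : HasDerivAt (fun y : ℝ => 3 * y) 3 x := by
      simpa using (hasDerivAt_id x).const_mul (3:ℝ)
    have := ((Real.hasDerivAt_cos (3 * x)).comp x h1).const_mul (3:ℝ)
    have e : -(9 * Real.sin (3 * x)) = 3 * (-Real.sin (3 * x) * 3) := by ring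
    rw [e]
    exact this
  -- first derivative of ψ on V ∩ Icc
  have step1 : ∀ x ∈ V ∩ Set.Icc (0:ℝ) π, deriv ψ x = 3 * Real.cos (3 * x) := by
    intro x hx
    have := deriv_eq_of_eqOn_aux hV hx (hψ.differentiable (by simp) x)
      (hds x).differentiableAt hsin
    rwa [(hds x).deriv] at this
  -- second derivative of ψ on V ∩ Icc
  have step2 : ∀ x ∈ V ∩ Set.Icc (0:ℝ) π, deriv (deriv ψ) x = -(9 * Real.sin (3 * x)) := by
    intro x hx
    have := deriv_eq_of_eqOn_aux hV hx (hψ'.differentiable (by simp) x)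
      (hdc x).differentiableAt step1
    rwa [(hdc x).deriv] at this
  -- h vanishes on V ∩ Icc
  set h : ℝ → ℝ := fun x => -(deriv (deriv ψ) x) - 9 * ψ x with hh
  have hzero : ∀ x ∈ V ∩ Set.Icc (0:ℝ) π, h x = 0 := by
    intro x hx
    simp only [hh, step2 x hx, hsin x hx]
    ring
  -- the compact set where ψ is nonzero
  set K : Set ℝ := Set.Icc (0:ℝ) π ∩ Vᶜ with hK
  have hKc : IsCompact K := isCompact_Icc.inter_right hV.isClosed_compl
  set U : Set ℝ := {x | ψ x ≠ 0} with hU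
  have hUo : IsOpen U := isOpen_ne_fun (hψ.continuous) continuous_const
  have hKU : K ⊆ U := by
    intro x hx hx0
    exact hx.2 (hzeros x hx.1 hx0)
  obtain ⟨U', hU'o, hKU', hclU'⟩ := exists_open_between_and_isCompact_closure hKc hUo hKU
  -- bump function: 0 outside U', 1 on K
  obtain ⟨f, hf0, hf1, _⟩ := exists_contMDiffMap_zero_one_of_isClosed (𝓘(ℝ, ℝ)) hU'o.isClosed_compl
    (hKc.isClosed) (by rw [Set.disjoint_compl_left_iff_subset]; exact hKU')
  have hfsmooth : ContDiff ℝ (⊤ : ℕ∞) f := contMDiff_iff_contDiff.mp f.contMDiff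
  have hfsupp : tsupport (⇑f) ⊆ U := by
    refine subset_trans ?_ hclU'.1
    apply closure_mono
    intro x hx
    by_contra hxU
    exact hx (hf0 (by simpa using hxU))
  -- g = f / ψ, smooth
  set g : ℝ → ℝ := fun x => f x * (ψ x)⁻¹ with hg
  have hgsmooth : ContDiff ℝ (⊤ : ℕ∞) g := by
    rw [contDiff_iff_contDiffAt]
    intro x
    by_cases hx : x ∈ tsupport (⇑f)
    · exact (hfsmooth.contDiffAt).mul ((hψ.contDiffAt).inv (hfsupp hx))
    · have : g =ᶠ[nhds x] 0 := by
        filter_upwards [(isClosed_closure (s := Function.support (⇑f))).isOpen_compl.mem_nhds hx]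
          with y hy
        have : f y = 0 := by
          by_contra h'
          exact hy (subset_closure (by simpa [Function.mem_support] using h'))
        simp [hg, this]
      exact ContDiffAt.congr_of_eventuallyEq contDiffAt_const this
  refine ⟨fun x => h x * g x, (hψ''.neg.sub (contDiff_const.mul hψ)).mul hgsmooth, ?_, ?_⟩
  · intro x hx
    by_cases hxV : x ∈ V
    · have h0 := hzero x ⟨hxV, hx⟩
      have h1 : -(deriv (deriv ψ) x) - 9 * ψ x = 0 := h0
      show -(deriv (deriv ψ) x) - h x * g x * ψ x = 9 * ψ x
      rw [h0, zero_mul, zero_mul]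
      linarith
    · have hxK : x ∈ K := ⟨hx, hxV⟩
      have hψx : ψ x ≠ 0 := hKU hxK
      have hgx : g x = (ψ x)⁻¹ := by simp [hg, hf1 hxK]
      show -(deriv (deriv ψ) x) - h x * g x * ψ x = 9 * ψ x
      rw [hgx]
      have h1 : h x * (ψ x)⁻¹ * ψ x = h x := by field_simp
      rw [h1]
      show -(deriv (deriv ψ) x) - (-(deriv (deriv ψ) x) - 9 * ψ x) = 9 * ψ x
      ring
  · intro x hx
    show h x * g x = 0
    rw [hzero x hx, zero_mul]
end

section
/- There exist C^∞ functions φ, ψ, a : ℝ → ℝ such that: (i) −φ″(x) − ψ′(x) = 9·φ(x) for every x ∈ [0, π]; (ii) −ψ″(x) − a(x)·ψ(x) = 9·ψ(x) for every x ∈ [0, π]; (iii) φ(0) = φ(π) = ψ(0) = ψ(π) = 0; (iv) φ(x) = 0 for every x ∈ [7π/15, 8π/15]; (v) ψ is not identically zero on [0, π] and φ is not identically zero on [0, π]. -/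
open Real Set MeasureTheory intervalIntegral

noncomputable section StmtAux

def TT : ℝ → ℝ := Real.smoothTransition
def tau (x : ℝ) : ℝ := TT ((x - π/3) * (15/π))
def th (x : ℝ) : ℝ := tau x * tau (π - x)
def rho (x : ℝ) : ℝ := TT ((x - π/12) * (48/π)) * TT ((π/6 - x) * (48/π))
def gg (x : ℝ) : ℝ := th x * (1 - Real.sin x)
def al : ℝ := 7*π/15
def VV : ℝ := ∫ t in (0:ℝ)..al, Real.sin (3*t) * Real.cos t
def GG : ℝ := ∫ t in (0:ℝ)..al, Real.sin (3*t) * deriv gg t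
def DD : ℝ := ∫ t in (0:ℝ)..al, Real.sin (3*t) * deriv rho t
def lam : ℝ := -(VV + GG)/DD
def psi (x : ℝ) : ℝ := Real.sin x + gg x + lam * (rho x + rho (π - x))

lemma cd_TT {n : ℕ∞} : ContDiff ℝ n TT := Real.smoothTransition.contDiff
lemma cd_tau : ContDiff ℝ (⊤ : ℕ∞) tau :=
  cd_TT.comp ((contDiff_id.sub contDiff_const).mul contDiff_const)
lemma cd_th : ContDiff ℝ (⊤ : ℕ∞) th :=
  cd_tau.mul (cd_tau.comp (contDiff_const.sub contDiff_id))
lemma cd_rho : ContDiff ℝ (⊤ : ℕ∞) rho :=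
  (cd_TT.comp ((contDiff_id.sub contDiff_const).mul contDiff_const)).mul
    (cd_TT.comp ((contDiff_const.sub contDiff_id).mul contDiff_const))
lemma cd_gg : ContDiff ℝ (⊤ : ℕ∞) gg :=
  cd_th.mul (contDiff_const.sub Real.contDiff_sin)
lemma cd_psi : ContDiff ℝ (⊤ : ℕ∞) psi :=
  (Real.contDiff_sin.add cd_gg).add
    (contDiff_const.mul (cd_rho.add (cd_rho.comp (contDiff_const.sub contDiff_id))))


lemma tau_one {x : ℝ} (hx : 2*π/5 ≤ x) : tau x = 1 := by
  apply Real.smoothTransition.one_of_one_le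
  rw [mul_div_assoc', le_div_iff₀ Real.pi_pos]; linarith

lemma tau_zero {x : ℝ} (hx : x ≤ π/3) : tau x = 0 := by
  apply Real.smoothTransition.zero_of_nonpos
  apply mul_nonpos_of_nonpos_of_nonneg (by linarith)
  positivity

lemma tau_nonneg (x : ℝ) : 0 ≤ tau x := Real.smoothTransition.nonneg _
lemma tau_le_one (x : ℝ) : tau x ≤ 1 := Real.smoothTransition.le_one _
lemma th_nonneg (x : ℝ) : 0 ≤ th x := mul_nonneg (tau_nonneg x) (tau_nonneg _)
lemma th_le_one (x : ℝ) : th x ≤ 1 :=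
  mul_le_one₀ (tau_le_one x) (tau_nonneg _) (tau_le_one _)
lemma rho_nonneg (x : ℝ) : 0 ≤ rho x :=
  mul_nonneg (Real.smoothTransition.nonneg _) (Real.smoothTransition.nonneg _)

lemma rho_zero_left {x : ℝ} (hx : x ≤ π/12) : rho x = 0 := by
  have : TT ((x - π/12) * (48/π)) = 0 := by
    apply Real.smoothTransition.zero_of_nonpos
    apply mul_nonpos_of_nonpos_of_nonneg (by linarith)
    positivity
  rw [rho, this, zero_mul]

lemma rho_zero_right {x : ℝ} (hx : π/6 ≤ x) : rho x = 0 := by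
  have : TT ((π/6 - x) * (48/π)) = 0 := by
    apply Real.smoothTransition.zero_of_nonpos
    apply mul_nonpos_of_nonpos_of_nonneg (by linarith)
    positivity
  rw [rho, this, mul_zero]

lemma rho_one {x : ℝ} (h1 : 5*π/48 ≤ x) (h2 : x ≤ 7*π/48) : rho x = 1 := by
  have a1 : TT ((x - π/12) * (48/π)) = 1 := by
    apply Real.smoothTransition.one_of_one_le
    rw [mul_div_assoc', le_div_iff₀ Real.pi_pos]; linarith
  have a2 : TT ((π/6 - x) * (48/π)) = 1 := by
    apply Real.smoothTransition.one_of_one_le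
    rw [mul_div_assoc', le_div_iff₀ Real.pi_pos]; linarith
  rw [rho, a1, a2, mul_one]

lemma th_one {x : ℝ} (h1 : 2*π/5 ≤ x) (h2 : x ≤ 3*π/5) : th x = 1 := by
  rw [th, tau_one h1, tau_one (by linarith), mul_one]

lemma th_zero_left {x : ℝ} (hx : x ≤ π/3) : th x = 0 := by
  rw [th, tau_zero hx, zero_mul]

lemma th_zero_right {x : ℝ} (hx : 2*π/3 ≤ x) : th x = 0 := by
  rw [th, tau_zero (x := π - x) (by linarith), mul_zero]

lemma psi_eq_sin_left {x : ℝ} (hx : x ≤ π/12) : psi x = Real.sin x := by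
  have hπ := Real.pi_pos
  rw [psi, gg, th_zero_left (by linarith), rho_zero_left hx,
    rho_zero_right (x := π - x) (by linarith)]
  ring

lemma psi_eq_sin_right {x : ℝ} (hx : 11*π/12 ≤ x) : psi x = Real.sin x := by
  have hπ := Real.pi_pos
  rw [psi, gg, th_zero_right (by linarith), rho_zero_right (by linarith),
    rho_zero_left (x := π - x) (by linarith)]
  ring

lemma psi_eq_one_mid {x : ℝ} (h1 : 2*π/5 ≤ x) (h2 : x ≤ 3*π/5) : psi x = 1 := by
  have hπ := Real.pi_pos
  rw [psi, gg, th_one h1 h2, rho_zero_right (by linarith),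
    rho_zero_right (x := π - x) (by linarith)]
  ring

lemma psi_symm (x : ℝ) : psi (π - x) = psi x := by
  rw [psi, psi, gg, gg, th, th, sub_sub_cancel, Real.sin_pi_sub]
  ring
lemma one_le_inf : (1 : WithTop ℕ∞) ≤ ((⊤ : ℕ∞) : WithTop ℕ∞) := by
  exact_mod_cast le_top

lemma diff_psi : Differentiable ℝ psi := cd_psi.differentiable (by simp)
lemma diff_gg : Differentiable ℝ gg := cd_gg.differentiable (by simp)
lemma diff_rho : Differentiable ℝ rho := cd_rho.differentiable (by simp)
lemma cd_dpsi : ContDiff ℝ (⊤ : ℕ∞) (deriv psi) := (contDiff_infty_iff_deriv.mp cd_psi).2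
lemma cont_dpsi : Continuous (deriv psi) := cd_dpsi.continuous
lemma cont_dgg : Continuous (deriv gg) := (contDiff_infty_iff_deriv.mp cd_gg).2.continuous
lemma cont_drho : Continuous (deriv rho) := (contDiff_infty_iff_deriv.mp cd_rho).2.continuous

lemma deriv_psi_mid {x : ℝ} (h1 : 2*π/5 < x) (h2 : x < 3*π/5) : deriv psi x = 0 := by
  have hev : psi =ᶠ[nhds x] fun _ => 1 :=
    Filter.eventuallyEq_of_mem (Ioo_mem_nhds h1 h2)
      (fun y hy => psi_eq_one_mid hy.1.le hy.2.le)
  rw [hev.deriv_eq, deriv_const]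

lemma deriv_rho_zero {x : ℝ} (h : π/6 < x) : deriv rho x = 0 := by
  have hev : rho =ᶠ[nhds x] fun _ => 0 :=
    Filter.eventuallyEq_of_mem (Ioi_mem_nhds h) (fun y hy => rho_zero_right (le_of_lt hy))
  rw [hev.deriv_eq, deriv_const]

lemma deriv_psi_symm (x : ℝ) : deriv psi (π - x) = -(deriv psi x) := by
  have hfun : (fun y => psi (π - y)) = psi := funext psi_symm
  have := deriv_comp_const_sub (f := psi) (a := π) (x := x)
  rw [hfun] at this
  linarith [this]

lemma hd_sin3 (t : ℝ) : HasDerivAt (fun t => Real.sin (3*t)) (3 * Real.cos (3*t)) t := by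
  have h := (Real.hasDerivAt_sin (3*t)).comp t ((hasDerivAt_id t).const_mul 3)
  rw [Function.comp_def] at h
  refine h.congr_deriv ?_
  ring

lemma hd_cos3 (t : ℝ) : HasDerivAt (fun t => Real.cos (3*t)) (-(3 * Real.sin (3*t))) t := by
  have h := (Real.hasDerivAt_cos (3*t)).comp t ((hasDerivAt_id t).const_mul 3)
  rw [Function.comp_def] at h
  refine h.congr_deriv ?_
  ring

lemma cont_sin3 : Continuous (fun t : ℝ => Real.sin (3*t)) :=
  Real.continuous_sin.comp (continuous_const.mul continuous_id)
lemma cont_cos3 : Continuous (fun t : ℝ => Real.cos (3*t)) :=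
  Real.continuous_cos.comp (continuous_const.mul continuous_id)

lemma deriv_psi_decomp (x : ℝ) :
    deriv psi x = Real.cos x + deriv gg x + lam * (deriv rho x - deriv rho (π - x)) := by
  have hcomp : HasDerivAt (fun y => rho (π - y)) (-(deriv rho (π - x))) x := by
    have h := ((diff_rho (π - x)).hasDerivAt).comp x
      ((hasDerivAt_id x).const_sub π)
    rw [Function.comp_def] at h
    refine h.congr_deriv ?_
    ring
  have h : HasDerivAt psi
      (Real.cos x + deriv gg x + lam * (deriv rho x + -(deriv rho (π - x)))) x :=
    ((Real.hasDerivAt_sin x).add ((diff_gg x).hasDerivAt)).add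
      ((((diff_rho x).hasDerivAt).add hcomp).const_mul lam)
  rw [h.deriv]
  ring
lemma al_pos : 0 < al := by rw [al]; positivity

lemma intable_sin3_drho : IntervalIntegrable (fun t => Real.sin (3*t) * deriv rho t)
    volume 0 al := (cont_sin3.mul cont_drho).intervalIntegrable _ _

lemma Irho_pos : 0 < ∫ t in (0:ℝ)..al, Real.cos (3*t) * rho t := by
  have hπ := Real.pi_pos
  have hc : Continuous (fun t => Real.cos (3*t) * rho t) :=
    cont_cos3.mul cd_rho.continuous
  have h58 : (0:ℝ) ≤ 5*π/48 := by positivity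
  have h57 : (5*π/48 : ℝ) ≤ 7*π/48 := by linarith
  have h7al : (7*π/48 : ℝ) ≤ al := by rw [al]; linarith
  have split1 : (∫ t in (0:ℝ)..(5*π/48), Real.cos (3*t) * rho t) +
      (∫ t in (5*π/48 : ℝ)..al, Real.cos (3*t) * rho t) =
      ∫ t in (0:ℝ)..al, Real.cos (3*t) * rho t :=
    integral_add_adjacent_intervals (hc.intervalIntegrable _ _) (hc.intervalIntegrable _ _)
  have split2 : (∫ t in (5*π/48 : ℝ)..(7*π/48), Real.cos (3*t) * rho t) +
      (∫ t in (7*π/48 : ℝ)..al, Real.cos (3*t) * rho t) =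
      ∫ t in (5*π/48 : ℝ)..al, Real.cos (3*t) * rho t :=
    integral_add_adjacent_intervals (hc.intervalIntegrable _ _) (hc.intervalIntegrable _ _)
  have h1 : 0 ≤ ∫ t in (0:ℝ)..(5*π/48), Real.cos (3*t) * rho t := by
    apply integral_nonneg h58
    intro u hu
    apply mul_nonneg _ (rho_nonneg u)
    apply Real.cos_nonneg_of_mem_Icc
    constructor <;> [linarith [hu.1]; linarith [hu.2]]
  have h3 : 0 ≤ ∫ t in (7*π/48 : ℝ)..al, Real.cos (3*t) * rho t := by
    apply integral_nonneg h7al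
    intro u hu
    rcases le_or_gt u (π/6) with hu6 | hu6
    · apply mul_nonneg _ (rho_nonneg u)
      apply Real.cos_nonneg_of_mem_Icc
      constructor <;> [linarith [hu.1]; linarith]
    · rw [rho_zero_right hu6.le, mul_zero]
  have h2 : 0 < ∫ t in (5*π/48 : ℝ)..(7*π/48), Real.cos (3*t) * rho t := by
    have hcongr : ∀ t ∈ uIcc (5*π/48 : ℝ) (7*π/48), Real.cos (3*t) * rho t = Real.cos (3*t) := by
      intro t ht
      rw [uIcc_of_le h57] at ht
      rw [rho_one ht.1 ht.2, mul_one]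
    rw [integral_congr hcongr]
    have heval : (∫ t in (5*π/48 : ℝ)..(7*π/48), Real.cos (3*t)) =
        Real.sin (3*(7*π/48))/3 - Real.sin (3*(5*π/48))/3 := by
      apply integral_eq_sub_of_hasDerivAt (f := fun t => Real.sin (3*t)/3)
      · intro t _
        exact (hd_sin3 t).div_const 3 |>.congr_deriv (by ring)
      · exact cont_cos3.intervalIntegrable _ _
    rw [heval]
    have hlt : Real.sin (3*(5*π/48)) < Real.sin (3*(7*π/48)) := by
      apply Real.sin_lt_sin_of_lt_of_le_pi_div_two (by linarith) (by linarith) (by linarith)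
    linarith
  linarith

lemma rho_al : rho al = 0 := by
  have hπ := Real.pi_pos
  exact rho_zero_right (by rw [al]; linarith)

lemma DD_eq : DD = -3 * ∫ t in (0:ℝ)..al, Real.cos (3*t) * rho t := by
  have hparts := intervalIntegral.integral_mul_deriv_eq_deriv_mul
    (u := fun t => Real.sin (3*t)) (u' := fun t => 3 * Real.cos (3*t))
    (v := rho) (v' := deriv rho) (a := (0:ℝ)) (b := al)
    (fun t _ => hd_sin3 t) (fun t _ => (diff_rho t).hasDerivAt)
    ((continuous_const.mul cont_cos3).intervalIntegrable _ _)
    (cont_drho.intervalIntegrable _ _)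
  rw [DD, hparts, rho_al]
  have : (∫ t in (0:ℝ)..al, 3 * Real.cos (3*t) * rho t) =
      3 * ∫ t in (0:ℝ)..al, Real.cos (3*t) * rho t := by
    rw [← intervalIntegral.integral_const_mul]
    congr 1
    funext t
    ring
  rw [this]
  norm_num
lemma gg_zero : gg 0 = 0 := by
  have hπ := Real.pi_pos
  rw [gg, th_zero_left (by linarith), zero_mul]

lemma gg_al : gg al = 1 - Real.sin al := by
  have hπ := Real.pi_pos
  rw [gg, th_one (by rw [al]; linarith) (by rw [al]; linarith), one_mul]

lemma gg_nonneg (x : ℝ) : 0 ≤ gg x :=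
  mul_nonneg (th_nonneg x) (by linarith [Real.sin_le_one x])

lemma GG_eq : GG = Real.sin (3*al) * gg al - ∫ t in (0:ℝ)..al, 3 * Real.cos (3*t) * gg t := by
  have hparts := intervalIntegral.integral_mul_deriv_eq_deriv_mul
    (u := fun t => Real.sin (3*t)) (u' := fun t => 3 * Real.cos (3*t))
    (v := gg) (v' := deriv gg) (a := (0:ℝ)) (b := al)
    (fun t _ => hd_sin3 t) (fun t _ => (diff_gg t).hasDerivAt)
    ((continuous_const.mul cont_cos3).intervalIntegrable _ _)
    (cont_dgg.intervalIntegrable _ _)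
  rw [GG, hparts, gg_zero]
  norm_num

lemma int_cos_gg_nonpos : (∫ t in (0:ℝ)..al, 3 * Real.cos (3*t) * gg t) ≤ 0 := by
  have hπ := Real.pi_pos
  have h : ∀ u ∈ Icc (0:ℝ) al, 0 ≤ -(3 * Real.cos (3*u) * gg u) := by
    intro u hu
    rcases le_or_gt u (π/3) with h3 | h3
    · rw [gg, th_zero_left h3, zero_mul, mul_zero, neg_zero]
    · have hcos : Real.cos (3*u) ≤ 0 := by
        apply Real.cos_nonpos_of_pi_div_two_le_of_le (by linarith)
        have := hu.2
        rw [al] at this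
        linarith
      have := gg_nonneg u
      nlinarith
  have h2 := integral_nonneg (μ := volume) al_pos.le h
  rw [intervalIntegral.integral_neg] at h2
  linarith

lemma sin_al_ge : (3:ℝ)/4 ≤ Real.sin al := by
  have hπ := Real.pi_pos
  have h1 : Real.sin (π/3) ≤ Real.sin al := by
    apply Real.sin_le_sin_of_le_of_le_pi_div_two (by linarith) (by rw [al]; linarith)
      (by rw [al]; linarith)
  rw [Real.sin_pi_div_three] at h1
  have h2 : (3:ℝ)/2 ≤ Real.sqrt 3 := by
    rw [show (3:ℝ)/2 = Real.sqrt ((3/2)^2) by rw [Real.sqrt_sq]; norm_num]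
    apply Real.sqrt_le_sqrt
    norm_num
  linarith

lemma GG_ge : -(1 - Real.sin al) ≤ GG := by
  rw [GG_eq, gg_al]
  have h1 : -1 ≤ Real.sin (3*al) := Real.neg_one_le_sin _
  have h2 : 0 ≤ 1 - Real.sin al := by linarith [Real.sin_le_one al]
  nlinarith [int_cos_gg_nonpos]

lemma VV_eq : VV = (-Real.cos (4*al)/8 - Real.cos (2*al)/4) - (-Real.cos (4*0)/8 - Real.cos (2*0)/4) := by
  rw [VV]
  apply integral_eq_sub_of_hasDerivAt (f := fun t => -Real.cos (4*t)/8 - Real.cos (2*t)/4)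
  · intro t _
    have h4 : HasDerivAt (fun t => Real.cos (4*t)) (-(4 * Real.sin (4*t))) t := by
      have h := (Real.hasDerivAt_cos (4*t)).comp t ((hasDerivAt_id t).const_mul 4)
      rw [Function.comp_def] at h
      refine h.congr_deriv ?_
      ring
    have h2 : HasDerivAt (fun t => Real.cos (2*t)) (-(2 * Real.sin (2*t))) t := by
      have h := (Real.hasDerivAt_cos (2*t)).comp t ((hasDerivAt_id t).const_mul 2)
      rw [Function.comp_def] at h
      refine h.congr_deriv ?_
      ring
    have h := (h4.neg.div_const 8).sub (h2.div_const 4)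
    refine h.congr_deriv ?_
    have e4 : (4:ℝ)*t = 3*t + t := by ring
    have e2 : (2:ℝ)*t = 3*t - t := by ring
    rw [e4, e2, Real.sin_add, Real.sin_sub]
    ring
  · exact (cont_sin3.mul Real.continuous_cos).intervalIntegrable _ _

lemma VV_ge : (1:ℝ)/4 ≤ VV := by
  have hπ := Real.pi_pos
  rw [VV_eq]
  have h4 : Real.cos (4*al) ≤ 1 := Real.cos_le_one _
  have h2 : Real.cos (2*al) ≤ 0 := by
    apply Real.cos_nonpos_of_pi_div_two_le_of_le (by rw [al]; linarith) (by rw [al]; linarith)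
  norm_num
  linarith

lemma VG_nonneg : 0 ≤ VV + GG := by
  have := VV_ge
  have := GG_ge
  have := sin_al_ge
  linarith

lemma DD_neg : DD < 0 := by
  rw [DD_eq]
  have := Irho_pos
  nlinarith

lemma lam_nonneg : 0 ≤ lam := by
  rw [lam]
  exact div_nonneg_iff.mpr (Or.inr ⟨by linarith [VG_nonneg], DD_neg.le⟩)

lemma psi_pos {x : ℝ} (h1 : 0 < x) (h2 : x < π) : 0 < psi x := by
  have hs := Real.sin_pos_of_pos_of_lt_pi h1 h2
  have h3 := th_nonneg x
  have h4 := th_le_one x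
  have h5 := rho_nonneg x
  have h6 := rho_nonneg (π - x)
  have h7 := lam_nonneg
  have h8 := Real.sin_le_one x
  rw [psi, gg]
  nlinarith
lemma drho_pi_sub {t : ℝ} (ht : t ∈ Set.uIcc (0:ℝ) al) : deriv rho (π - t) = 0 := by
  have hπ := Real.pi_pos
  rw [uIcc_of_le al_pos.le] at ht
  apply deriv_rho_zero
  have := ht.2
  rw [al] at this
  linarith

lemma icond : (∫ t in (0:ℝ)..al, Real.sin (3*t) * deriv psi t) = 0 := by
  have hcongr : ∀ t ∈ Set.uIcc (0:ℝ) al, Real.sin (3*t) * deriv psi t =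
      (Real.sin (3*t) * Real.cos t + Real.sin (3*t) * deriv gg t) +
        lam * (Real.sin (3*t) * deriv rho t) := by
    intro t ht
    rw [deriv_psi_decomp t, drho_pi_sub ht]
    ring
  have i1 : IntervalIntegrable (fun t => Real.sin (3*t) * Real.cos t) volume 0 al :=
    (cont_sin3.mul Real.continuous_cos).intervalIntegrable _ _
  have i2 : IntervalIntegrable (fun t => Real.sin (3*t) * deriv gg t) volume 0 al :=
    (cont_sin3.mul cont_dgg).intervalIntegrable _ _
  have i3 : IntervalIntegrable (fun t => lam * (Real.sin (3*t) * deriv rho t)) volume 0 al :=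
    (continuous_const.mul (cont_sin3.mul cont_drho)).intervalIntegrable _ _
  rw [integral_congr hcongr, integral_add (i1.add i2) i3, integral_add i1 i2,
    intervalIntegral.integral_const_mul]
  have hDD : (∫ t in (0:ℝ)..al, Real.sin (3*t) * deriv rho t) = DD := rfl
  have hVV : (∫ t in (0:ℝ)..al, Real.sin (3*t) * Real.cos t) = VV := rfl
  have hGG : (∫ t in (0:ℝ)..al, Real.sin (3*t) * deriv gg t) = GG := rfl
  rw [hDD, hVV, hGG, lam]
  field_simp [DD_neg.ne]
  ring

def PP (x : ℝ) : ℝ := ∫ t in al..x, Real.cos (3*t) * deriv psi t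
def QQ (x : ℝ) : ℝ := ∫ t in al..x, Real.sin (3*t) * deriv psi t
def phi (x : ℝ) : ℝ := -(1/3) * (Real.sin (3*x) * PP x - Real.cos (3*x) * QQ x)
def phi1 (x : ℝ) : ℝ := -(Real.cos (3*x) * PP x + Real.sin (3*x) * QQ x)
def phi2 (x : ℝ) : ℝ := 3 * Real.sin (3*x) * PP x - 3 * Real.cos (3*x) * QQ x - deriv psi x

lemma hd_PP (x : ℝ) : HasDerivAt PP (Real.cos (3*x) * deriv psi x) x :=
  ((cont_cos3.mul cont_dpsi).integral_hasStrictDerivAt al x).hasDerivAt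

lemma hd_QQ (x : ℝ) : HasDerivAt QQ (Real.sin (3*x) * deriv psi x) x :=
  ((cont_sin3.mul cont_dpsi).integral_hasStrictDerivAt al x).hasDerivAt

lemma QQ_zero : QQ 0 = 0 := by
  rw [QQ, integral_symm, icond, neg_zero]

lemma dpsi_zero_ab {t : ℝ} (h1 : al ≤ t) (h2 : t ≤ 8*π/15) : deriv psi t = 0 := by
  have hπ := Real.pi_pos
  apply deriv_psi_mid
  · rw [al] at h1; linarith
  · linarith

lemma PP_mid {x : ℝ} (h1 : al ≤ x) (h2 : x ≤ 8*π/15) : PP x = 0 := by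
  rw [PP]
  have hcongr : ∀ t ∈ Set.uIcc al x, Real.cos (3*t) * deriv psi t = 0 := by
    intro t ht
    rw [uIcc_of_le h1] at ht
    rw [dpsi_zero_ab ht.1 (le_trans ht.2 h2), mul_zero]
  rw [integral_congr hcongr, intervalIntegral.integral_zero]

lemma QQ_mid {x : ℝ} (h1 : al ≤ x) (h2 : x ≤ 8*π/15) : QQ x = 0 := by
  rw [QQ]
  have hcongr : ∀ t ∈ Set.uIcc al x, Real.sin (3*t) * deriv psi t = 0 := by
    intro t ht
    rw [uIcc_of_le h1] at ht
    rw [dpsi_zero_ab ht.1 (le_trans ht.2 h2), mul_zero]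
  rw [integral_congr hcongr, intervalIntegral.integral_zero]

lemma sin3_pi_sub (x : ℝ) : Real.sin (3*(π - x)) = Real.sin (3*x) := by
  rw [show 3*(π - x) = (π - 3*x) + 2*π by ring, Real.sin_add_two_pi, Real.sin_pi_sub]

lemma QQ_pi : QQ π = 0 := by
  have hπ := Real.pi_pos
  have hbe : al ≤ 8*π/15 := by rw [al]; linarith
  have hbp : (8*π/15 : ℝ) ≤ π := by linarith
  have hc : Continuous (fun t => Real.sin (3*t) * deriv psi t) := cont_sin3.mul cont_dpsi
  have hadj : QQ (8*π/15) + (∫ t in (8*π/15 : ℝ)..π, Real.sin (3*t) * deriv psi t) = QQ π :=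
    integral_add_adjacent_intervals (hc.intervalIntegrable _ _) (hc.intervalIntegrable _ _)
  have h1 : QQ (8*π/15) = 0 := QQ_mid hbe le_rfl
  have hsub := integral_comp_sub_left (a := (0:ℝ)) (b := al)
    (fun u => Real.sin (3*u) * deriv psi u) π
  have hπal : π - al = 8*π/15 := by rw [al]; ring
  have hπ0 : π - (0:ℝ) = π := by ring
  rw [hπal, hπ0] at hsub
  have hlhs : (∫ x in (0:ℝ)..al, Real.sin (3*(π - x)) * deriv psi (π - x)) =
      -∫ x in (0:ℝ)..al, Real.sin (3*x) * deriv psi x := by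
    rw [← intervalIntegral.integral_neg]
    apply integral_congr
    intro t _
    simp only [sin3_pi_sub, deriv_psi_symm]
    ring
  rw [hlhs, icond, neg_zero] at hsub
  rw [← hadj, h1, ← hsub]
  ring

lemma hd_phi (x : ℝ) : HasDerivAt phi (phi1 x) x := by
  have h := (((hd_sin3 x).mul (hd_PP x)).sub ((hd_cos3 x).mul (hd_QQ x))).const_mul (-(1/3) : ℝ)
  have heq : (-(1/3) : ℝ) * (3 * Real.cos (3*x) * PP x + Real.sin (3*x) * (Real.cos (3*x) * deriv psi x) -
      (-(3 * Real.sin (3*x)) * QQ x + Real.cos (3*x) * (Real.sin (3*x) * deriv psi x))) = phi1 x := by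
    rw [phi1]; ring
  rw [heq] at h
  exact h

lemma deriv_phi : deriv phi = phi1 := funext fun x => (hd_phi x).deriv

lemma hd_phi1 (x : ℝ) : HasDerivAt phi1 (phi2 x) x := by
  have h := ((((hd_cos3 x).mul (hd_PP x)).add ((hd_sin3 x).mul (hd_QQ x))).neg)
  have heq : -(-(3 * Real.sin (3*x)) * PP x + Real.cos (3*x) * (Real.cos (3*x) * deriv psi x) +
      (3 * Real.cos (3*x) * QQ x + Real.sin (3*x) * (Real.sin (3*x) * deriv psi x))) = phi2 x := by
    rw [phi2]
    have hsc := Real.sin_sq_add_cos_sq (3*x)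
    linear_combination (-(deriv psi x)) * hsc
  rw [heq] at h
  exact h

lemma deriv2_phi (x : ℝ) : deriv (deriv phi) x = phi2 x := by
  rw [deriv_phi]
  exact (hd_phi1 x).deriv

lemma eq_one (x : ℝ) : -(deriv (deriv phi) x) - deriv psi x = 9 * phi x := by
  rw [deriv2_phi, phi2, phi]
  ring

lemma cd_PP : ContDiff ℝ (⊤ : ℕ∞) PP := by
  apply contDiff_infty_iff_deriv.mpr
  constructor
  · exact fun x => (hd_PP x).differentiableAt
  · have : deriv PP = fun x => Real.cos (3*x) * deriv psi x := funext fun x => (hd_PP x).deriv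
    rw [this]
    exact (Real.contDiff_cos.comp (contDiff_const.mul contDiff_id)).mul cd_dpsi

lemma cd_QQ : ContDiff ℝ (⊤ : ℕ∞) QQ := by
  apply contDiff_infty_iff_deriv.mpr
  constructor
  · exact fun x => (hd_QQ x).differentiableAt
  · have : deriv QQ = fun x => Real.sin (3*x) * deriv psi x := funext fun x => (hd_QQ x).deriv
    rw [this]
    exact (Real.contDiff_sin.comp (contDiff_const.mul contDiff_id)).mul cd_dpsi

lemma cd_phi : ContDiff ℝ (⊤ : ℕ∞) phi := by
  apply contDiff_const.mul
  exact ((Real.contDiff_sin.comp (contDiff_const.mul contDiff_id)).mul cd_PP).sub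
    ((Real.contDiff_cos.comp (contDiff_const.mul contDiff_id)).mul cd_QQ)
def hh (x : ℝ) : ℝ := deriv (deriv psi) x + psi x
def aa (x : ℝ) : ℝ := -8 - hh x / psi x

lemma cd_hh : ContDiff ℝ (⊤ : ℕ∞) hh :=
  ((contDiff_infty_iff_deriv.mp cd_dpsi).2).add cd_psi

lemma deriv2_psi_left {x : ℝ} (h : x < π/12) : deriv (deriv psi) x = -Real.sin x := by
  have hπ := Real.pi_pos
  have hev : psi =ᶠ[nhds x] Real.sin :=
    Filter.eventuallyEq_of_mem (Iio_mem_nhds h) (fun y hy => psi_eq_sin_left (le_of_lt hy))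
  have h1 : deriv psi =ᶠ[nhds x] deriv Real.sin := hev.deriv
  rw [Real.deriv_sin] at h1
  rw [h1.deriv_eq, Real.deriv_cos]

lemma deriv2_psi_right {x : ℝ} (h : 11*π/12 < x) : deriv (deriv psi) x = -Real.sin x := by
  have hev : psi =ᶠ[nhds x] Real.sin :=
    Filter.eventuallyEq_of_mem (Ioi_mem_nhds h) (fun y hy => psi_eq_sin_right (le_of_lt hy))
  have h1 : deriv psi =ᶠ[nhds x] deriv Real.sin := hev.deriv
  rw [Real.deriv_sin] at h1
  rw [h1.deriv_eq, Real.deriv_cos]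

lemma hh_left {x : ℝ} (h : x < π/12) : hh x = 0 := by
  rw [hh, deriv2_psi_left h, psi_eq_sin_left h.le]
  ring

lemma hh_right {x : ℝ} (h : 11*π/12 < x) : hh x = 0 := by
  rw [hh, deriv2_psi_right h, psi_eq_sin_right h.le]
  ring

lemma cd_aa : ContDiff ℝ (⊤ : ℕ∞) aa := by
  have hπ := Real.pi_pos
  rw [contDiff_iff_contDiffAt]
  intro x
  rcases lt_or_ge x (π/12) with hx | hx
  · have hev : aa =ᶠ[nhds x] fun _ => (-8 : ℝ) := by
      apply Filter.eventuallyEq_of_mem (Iio_mem_nhds hx)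
      intro y hy
      rw [aa, hh_left hy, zero_div, sub_zero]
    exact ContDiffAt.congr_of_eventuallyEq contDiffAt_const hev
  rcases lt_or_ge (11*π/12) x with hx2 | hx2
  · have hev : aa =ᶠ[nhds x] fun _ => (-8 : ℝ) := by
      apply Filter.eventuallyEq_of_mem (Ioi_mem_nhds hx2)
      intro y hy
      rw [aa, hh_right hy, zero_div, sub_zero]
    exact ContDiffAt.congr_of_eventuallyEq contDiffAt_const hev
  · have hne : psi x ≠ 0 := (psi_pos (by linarith) (by linarith)).ne'
    exact contDiffAt_const.sub ((cd_hh.contDiffAt).div (cd_psi.contDiffAt) hne)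

lemma psi_zero : psi 0 = 0 := by
  have hπ := Real.pi_pos
  rw [psi_eq_sin_left (by linarith), Real.sin_zero]

lemma psi_pi : psi π = 0 := by
  have hπ := Real.pi_pos
  rw [psi_eq_sin_right (by linarith), Real.sin_pi]

lemma eq_two {x : ℝ} (hx : x ∈ Icc (0:ℝ) π) :
    -(deriv (deriv psi) x) - aa x * psi x = 9 * psi x := by
  have hπ := Real.pi_pos
  rcases eq_or_lt_of_le hx.1 with h0 | h0
  · rw [← h0, deriv2_psi_left (by linarith), psi_zero, Real.sin_zero]
    ring
  rcases eq_or_lt_of_le hx.2 with h1 | h1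
  · rw [h1, deriv2_psi_right (by linarith), psi_pi, Real.sin_pi]
    ring
  · have hne : psi x ≠ 0 := (psi_pos h0 h1).ne'
    have haa : aa x * psi x = -8 * psi x - hh x := by
      rw [aa, sub_mul, div_mul_cancel₀ _ hne]
    rw [haa, hh]
    ring

lemma phi_zero : phi 0 = 0 := by
  rw [phi, QQ_zero, show (3:ℝ)*0 = 0 by ring, Real.sin_zero]
  ring

lemma sin_3pi : Real.sin (3*π) = 0 := by
  rw [show (3:ℝ)*π = π + 2*π by ring, Real.sin_add_two_pi, Real.sin_pi]

lemma phi_pi : phi π = 0 := by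
  rw [phi, QQ_pi, sin_3pi]
  ring

lemma phi_mid {x : ℝ} (hx : x ∈ Icc (7*π/15) (8*π/15)) : phi x = 0 := by
  have h1 : al ≤ x := by rw [al]; exact hx.1
  rw [phi, PP_mid h1 hx.2, QQ_mid h1 hx.2]
  ring

lemma psi_half : psi (π/2) = 1 := by
  have hπ := Real.pi_pos
  exact psi_eq_one_mid (by linarith) (by linarith)

lemma phi_nontriv : ∃ x ∈ Icc (0:ℝ) π, phi x ≠ 0 := by
  have hπ := Real.pi_pos
  by_contra hcon
  push_neg at hcon
  have hdz : ∀ x ∈ Ioo (0:ℝ) π, deriv psi x = 0 := by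
    intro x hx
    have hev : phi =ᶠ[nhds x] fun _ => (0:ℝ) :=
      Filter.eventuallyEq_of_mem (Ioo_mem_nhds hx.1 hx.2)
        (fun y hy => hcon y (Ioo_subset_Icc_self hy))
    have h1 : deriv phi =ᶠ[nhds x] deriv (fun _ : ℝ => (0:ℝ)) := hev.deriv
    have h2 : deriv (deriv phi) x = deriv (deriv (fun _ : ℝ => (0:ℝ))) x := h1.deriv_eq
    have h3 : deriv (deriv (fun _ : ℝ => (0:ℝ))) x = 0 := by
      have : deriv (fun _ : ℝ => (0:ℝ)) = fun _ => (0:ℝ) := funext fun y => deriv_const y 0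
      rw [this, deriv_const]
    have heq := eq_one x
    rw [hcon x (Ioo_subset_Icc_self hx), h2, h3] at heq
    linarith
  have hcl : EqOn (deriv psi) (fun _ : ℝ => (0:ℝ)) (Icc 0 π) := by
    have h1 : EqOn (deriv psi) (fun _ : ℝ => (0:ℝ)) (Ioo 0 π) := fun x hx => hdz x hx
    have h2 := h1.closure cont_dpsi continuous_const
    rw [closure_Ioo (by linarith : (0:ℝ) ≠ π)] at h2
    exact h2
  have hint : psi (π/2) - psi 0 = ∫ x in (0:ℝ)..(π/2), deriv psi x :=
    (integral_eq_sub_of_hasDerivAt (fun t _ => (diff_psi t).hasDerivAt)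
      (cont_dpsi.intervalIntegrable _ _)).symm
  have hzero : (∫ x in (0:ℝ)..(π/2), deriv psi x) = 0 := by
    have hcongr : ∀ t ∈ Set.uIcc (0:ℝ) (π/2), deriv psi t = 0 := by
      intro t ht
      rw [uIcc_of_le (by linarith)] at ht
      exact hcl ⟨ht.1, by linarith [ht.2]⟩
    rw [integral_congr hcongr, intervalIntegral.integral_zero]
  rw [hzero, psi_half, psi_zero] at hint
  linarith

end StmtAux

theorem stmt_8 :
    ∃ φ ψ a : ℝ → ℝ,
      ContDiff ℝ (⊤ : ℕ∞) φ ∧ ContDiff ℝ (⊤ : ℕ∞) ψ ∧ ContDiff ℝ (⊤ : ℕ∞) a ∧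
      (∀ x ∈ Set.Icc (0:ℝ) π, -(deriv (deriv φ) x) - deriv ψ x = 9 * φ x) ∧
      (∀ x ∈ Set.Icc (0:ℝ) π, -(deriv (deriv ψ) x) - a x * ψ x = 9 * ψ x) ∧
      φ 0 = 0 ∧ φ π = 0 ∧ ψ 0 = 0 ∧ ψ π = 0 ∧
      (∀ x ∈ Set.Icc (7 * π / 15) (8 * π / 15), φ x = 0) ∧
      (∃ x ∈ Set.Icc (0:ℝ) π, ψ x ≠ 0) ∧ (∃ x ∈ Set.Icc (0:ℝ) π, φ x ≠ 0) := by
  have hπ := Real.pi_pos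
  refine ⟨phi, psi, aa, cd_phi, cd_psi, cd_aa,
    fun x _ => eq_one x, fun x hx => eq_two hx,
    phi_zero, phi_pi, psi_zero, psi_pi,
    fun x hx => phi_mid (by rw [show 7*π/15 = 7*π/15 from rfl]; exact ⟨by linarith [hx.1], by linarith [hx.2]⟩),
    ⟨π/2, ⟨by linarith, by linarith⟩, by rw [psi_half]; norm_num⟩,
    phi_nontriv⟩
end

section
/- For every α, β with 0 < α < β < π there exist C^∞ functions φ, a : ℝ → ℝ such that φ(0) = φ(π) = 0, φ(x) > 0 for every x ∈ (0, π), φ(x) = 1 for every x ∈ [α, β], and −φ″(x) − a(x)·φ(x) = φ(x) for every x ∈ [0, π]. -/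
open Real

private lemma affine_cd (c d : ℝ) :
    ContDiff ℝ (⊤ : ℕ∞) (fun x : ℝ => Real.smoothTransition ((x - c)/d)) :=
  Real.smoothTransition.contDiff.comp ((contDiff_id.sub contDiff_const).div_const _)

private lemma affine_cd' (c d : ℝ) :
    ContDiff ℝ (⊤ : ℕ∞) (fun x : ℝ => Real.smoothTransition ((c - x)/d)) :=
  Real.smoothTransition.contDiff.comp ((contDiff_const.sub contDiff_id).div_const _)

private lemma dd_eq {f g : ℝ → ℝ} {U : Set ℝ} (hU : IsOpen U) {x : ℝ} (hx : x ∈ U)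
    (h : Set.EqOn f g U) : deriv (deriv f) x = deriv (deriv g) x := by
  have h2 : deriv f =ᶠ[nhds x] deriv g := by
    filter_upwards [hU.eventually_mem hx] with y hy
    exact (Filter.eventuallyEq_of_mem (hU.mem_nhds hy) h).deriv_eq
  exact h2.deriv_eq

theorem stmt_9 (α β : ℝ) (hα : 0 < α) (hαβ : α < β) (hβ : β < π) :
    ∃ φ a : ℝ → ℝ,
      ContDiff ℝ (⊤ : ℕ∞) φ ∧ ContDiff ℝ (⊤ : ℕ∞) a ∧
      φ 0 = 0 ∧ φ π = 0 ∧
      (∀ x ∈ Set.Ioo (0:ℝ) π, 0 < φ x) ∧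
      (∀ x ∈ Set.Icc α β, φ x = 1) ∧
      (∀ x ∈ Set.Icc (0:ℝ) π, -(deriv (deriv φ) x) - a x * φ x = φ x) := by
  have hπ : (0:ℝ) < π := lt_trans (lt_trans hα hαβ) hβ
  set p : ℝ := α/2 with hp_def
  set s : ℝ := (β+π)/2 with hs_def
  set p2 : ℝ := α/4 with hp2_def
  set s2 : ℝ := (s+π)/2 with hs2_def
  have hp : 0 < p := by positivity
  have hpα : p < α := by rw [hp_def]; linarith
  have hβs : β < s := by rw [hs_def]; linarith
  have hsπ : s < π := by rw [hs_def]; linarith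
  have hp2 : 0 < p2 := by positivity
  have hp2p : p2 < p := by rw [hp2_def, hp_def]; linarith
  have hss2 : s < s2 := by rw [hs2_def]; linarith
  have hs2π : s2 < π := by rw [hs2_def]; linarith
  set χ : ℝ → ℝ := fun x => Real.smoothTransition ((x - p)/(α - p)) * Real.smoothTransition ((s - x)/(s - β)) with hχ_def
  set φ : ℝ → ℝ := fun x => Real.sin x + χ x * (1 - Real.sin x) with hφ_def
  set χ₂ : ℝ → ℝ := fun x => Real.smoothTransition ((x - p2)/(p - p2)) * Real.smoothTransition ((s2 - x)/(s2 - s)) with hχ₂_def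
  set ρ : ℝ → ℝ := fun x => χ₂ x * φ x + (1 - χ₂ x) with hρ_def
  -- basic facts about χ
  have hχ0 : ∀ x ≤ p, χ x = 0 := by
    intro x hx
    have : (x - p)/(α - p) ≤ 0 := div_nonpos_of_nonpos_of_nonneg (by linarith) (by linarith)
    rw [hχ_def]
    simp only [Real.smoothTransition.zero_of_nonpos this, zero_mul]
  have hχ0' : ∀ x, s ≤ x → χ x = 0 := by
    intro x hx
    have : (s - x)/(s - β) ≤ 0 := div_nonpos_of_nonpos_of_nonneg (by linarith) (by linarith)
    rw [hχ_def]
    simp only [Real.smoothTransition.zero_of_nonpos this, mul_zero]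
  have hχ1 : ∀ x ∈ Set.Icc α β, χ x = 1 := by
    intro x hx
    have h1 : (1:ℝ) ≤ (x - p)/(α - p) := (le_div_iff₀ (by linarith)).2 (by linarith [hx.1])
    have h2 : (1:ℝ) ≤ (s - x)/(s - β) := (le_div_iff₀ (by linarith)).2 (by linarith [hx.2])
    rw [hχ_def]
    simp only [Real.smoothTransition.one_of_one_le h1, Real.smoothTransition.one_of_one_le h2,
      one_mul]
  have hχnn : ∀ x, 0 ≤ χ x := fun x =>
    mul_nonneg (Real.smoothTransition.nonneg _) (Real.smoothTransition.nonneg _)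
  have hχle : ∀ x, χ x ≤ 1 := fun x =>
    mul_le_one₀ (Real.smoothTransition.le_one _) (Real.smoothTransition.nonneg _)
      (Real.smoothTransition.le_one _)
  -- φ equals sin outside [p, s]
  have hφsin : ∀ x, x < p ∨ s < x → φ x = Real.sin x := by
    rintro x (hx | hx)
    · rw [hφ_def]; simp only [hχ0 x hx.le, zero_mul, add_zero]
    · rw [hφ_def]; simp only [hχ0' x hx.le, zero_mul, add_zero]
  -- positivity of φ on (0, π)
  have hφpos : ∀ x ∈ Set.Ioo (0:ℝ) π, 0 < φ x := by
    intro x hx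
    have h1 : 0 < Real.sin x := Real.sin_pos_of_pos_of_lt_pi hx.1 hx.2
    have h2 : Real.sin x ≤ 1 := Real.sin_le_one x
    have h3 := hχnn x
    rw [hφ_def]
    dsimp only
    nlinarith
  -- φ = 1 on [α, β]
  have hφone : ∀ x ∈ Set.Icc α β, φ x = 1 := by
    intro x hx
    rw [hφ_def]
    dsimp only
    rw [hχ1 x hx]; ring
  -- smoothness
  have hχcd : ContDiff ℝ (⊤ : ℕ∞) χ := (affine_cd p (α - p)).mul (affine_cd' s (s - β))
  have hφcd : ContDiff ℝ (⊤ : ℕ∞) φ :=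
    Real.contDiff_sin.add (hχcd.mul (contDiff_const.sub Real.contDiff_sin))
  have hχ₂cd : ContDiff ℝ (⊤ : ℕ∞) χ₂ := (affine_cd p2 (p - p2)).mul (affine_cd' s2 (s2 - s))
  have hρcd : ContDiff ℝ (⊤ : ℕ∞) ρ :=
    (hχ₂cd.mul hφcd).add (contDiff_const.sub hχ₂cd)
  -- χ₂ facts
  have hχ₂1 : ∀ x ∈ Set.Icc p s, χ₂ x = 1 := by
    intro x hx
    have h1 : (1:ℝ) ≤ (x - p2)/(p - p2) := (le_div_iff₀ (by linarith)).2 (by linarith [hx.1])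
    have h2 : (1:ℝ) ≤ (s2 - x)/(s2 - s) := (le_div_iff₀ (by linarith)).2 (by linarith [hx.2])
    rw [hχ₂_def]
    simp only [Real.smoothTransition.one_of_one_le h1, Real.smoothTransition.one_of_one_le h2,
      one_mul]
  have hχ₂nn : ∀ x, 0 ≤ χ₂ x := fun x =>
    mul_nonneg (Real.smoothTransition.nonneg _) (Real.smoothTransition.nonneg _)
  have hχ₂le : ∀ x, χ₂ x ≤ 1 := fun x =>
    mul_le_one₀ (Real.smoothTransition.le_one _) (Real.smoothTransition.nonneg _)
      (Real.smoothTransition.le_one _)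
  have hχ₂0 : ∀ x, x ≤ p2 ∨ s2 ≤ x → χ₂ x = 0 := by
    rintro x (hx | hx)
    · have : (x - p2)/(p - p2) ≤ 0 := div_nonpos_of_nonpos_of_nonneg (by linarith) (by linarith)
      rw [hχ₂_def]
      simp only [Real.smoothTransition.zero_of_nonpos this, zero_mul]
    · have : (s2 - x)/(s2 - s) ≤ 0 := div_nonpos_of_nonpos_of_nonneg (by linarith) (by linarith)
      rw [hχ₂_def]
      simp only [Real.smoothTransition.zero_of_nonpos this, mul_zero]
  -- ρ is positive everywhere
  have hρpos : ∀ x, 0 < ρ x := by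
    intro x
    rcases lt_or_ge 0 x with hx0 | hx0
    · rcases lt_or_ge x π with hxπ | hxπ
      · have h1 := hφpos x ⟨hx0, hxπ⟩
        have h2 := hχ₂nn x
        have h3 := hχ₂le x
        rw [hρ_def]; dsimp only
        rcases le_or_gt (φ x) 1 with hle | hle
        · nlinarith [mul_nonneg (sub_nonneg.2 h3) (sub_nonneg.2 hle)]
        · nlinarith [mul_le_mul_of_nonneg_left hle.le h2]
      · have : χ₂ x = 0 := hχ₂0 x (Or.inr (by linarith))
        rw [hρ_def]; dsimp only; rw [this]; norm_num
    · have : χ₂ x = 0 := hχ₂0 x (Or.inl (by linarith))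
      rw [hρ_def]; dsimp only; rw [this]; norm_num
  -- ρ = φ on [p, s]
  have hρφ : ∀ x ∈ Set.Icc p s, ρ x = φ x := by
    intro x hx
    rw [hρ_def]; dsimp only; rw [hχ₂1 x hx]; ring
  -- the ODE outside [p, s]
  have hode : ∀ x, x < p ∨ s < x → deriv (deriv φ) x = -φ x := by
    rintro x (hx | hx)
    · have heq : Set.EqOn φ Real.sin (Set.Iio p) := fun y hy => hφsin y (Or.inl hy)
      have := dd_eq isOpen_Iio (Set.mem_Iio.2 hx) heq
      rw [this, Real.deriv_sin, hφsin x (Or.inl hx)]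
      simp
    · have heq : Set.EqOn φ Real.sin (Set.Ioi s) := fun y hy => hφsin y (Or.inr hy)
      have := dd_eq isOpen_Ioi (Set.mem_Ioi.2 hx) heq
      rw [this, Real.deriv_sin, hφsin x (Or.inr hx)]
      simp
  -- definition of a
  set a : ℝ → ℝ := fun x => -(deriv (deriv φ) x + φ x) / ρ x with ha_def
  have hDcd : ContDiff ℝ (⊤ : ℕ∞) (deriv (deriv φ)) := by
    have h1 : ContDiff ℝ (⊤ : ℕ∞) (deriv φ) := (contDiff_infty_iff_deriv.mp hφcd).2
    exact (contDiff_infty_iff_deriv.mp h1).2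
  have hacd : ContDiff ℝ (⊤ : ℕ∞) a :=
    ((hDcd.add hφcd).neg).div hρcd (fun x => (hρpos x).ne')
  -- main identity
  have hmain : ∀ x, a x * φ x = -(deriv (deriv φ) x) - φ x := by
    intro x
    by_cases hx : x ∈ Set.Icc p s
    · have h1 := hρφ x hx
      have h2 := hρpos x
      rw [ha_def]; dsimp only
      rw [h1]
      have h3 : φ x ≠ 0 := by rw [← h1]; exact h2.ne'
      field_simp
      ring
    · have hx' : x < p ∨ s < x := by
        rcases lt_or_ge x p with h | h
        · exact Or.inl h
        · refine Or.inr ?_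
          by_contra h2
          exact hx ⟨h, le_of_not_gt h2⟩
      have h1 := hode x hx'
      rw [ha_def]; dsimp only
      rw [h1]
      ring
  refine ⟨φ, a, hφcd, hacd, ?_, ?_, hφpos, hφone, ?_⟩
  · rw [hφ_def]; dsimp only
    rw [hχ0 0 hp.le]; simp
  · rw [hφ_def]; dsimp only
    rw [hχ0' π hsπ.le]; simp
  · intro x _
    have := hmain x
    linarith
end

section
/- Let N ≥ 1, let Ω ⊂ ℝ^N be a bounded open set, and let ω₁, ω₂ be open sets with the closure of ω₁ contained in ω₂ and the closure of ω₂ contained in Ω. Suppose φ₁ : ℝ^N → ℝ is a C^∞ function with φ₁(x) > 0 for every x ∈ Ω, φ₁(x) = 0 for every x in the boundary ∂Ω, and −Δφ₁(x) = λ₁·φ₁(x) for every x ∈ Ω, for some λ₁ ∈ ℝ. Then there exist C^∞ functions φ : ℝ^N → ℝ and a : Ω → ℝ such that: φ(x) > 0 for every x ∈ Ω; φ(x) = 0 for every x ∈ ∂Ω; φ(x) = 1 for every x ∈ ω₁ (in particular ∂_{x₁}φ = 0 on ω₁); −Δφ(x) − a(x)·φ(x) = φ(x) for every x ∈ Ω;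 and a(x) = λ₁ − 1 for every x ∈ Ω outside the closure of ω₂ (in particular a is bounded on Ω). -/
open Real

/-- Partial derivative of `f : ℝ^N → ℝ` in the `i`-th coordinate direction. -/
noncomputable def pd {N : ℕ} (i : Fin N) (f : (Fin N → ℝ) → ℝ) (x : Fin N → ℝ) : ℝ :=
  deriv (fun s => f (Function.update x i s)) (x i)

/-- The Laplacian `Δf = Σᵢ ∂²f/∂xᵢ²` of `f : ℝ^N → ℝ`. -/
noncomputable def lap {N : ℕ} (f : (Fin N → ℝ) → ℝ) (x : Fin N → ℝ) : ℝ :=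
  ∑ i, pd i (fun y => pd i f y) x

lemma upd_cont {N : ℕ} (i : Fin N) (x : Fin N → ℝ) :
    Continuous (fun s : ℝ => Function.update x i s) := by
  refine continuous_pi fun j => ?_
  rcases eq_or_ne j i with h | h
  · subst h; simpa [Function.update_apply] using continuous_id'
  · simpa [Function.update_apply, h] using continuous_const

lemma pd_congr {N : ℕ} (i : Fin N) {f g : (Fin N → ℝ) → ℝ} {x : Fin N → ℝ}
    (h : f =ᶠ[nhds x] g) : pd i f x = pd i g x := by
  unfold pd
  apply Filter.EventuallyEq.deriv_eq
  have hc : Filter.Tendsto (fun s : ℝ => Function.update x i s) (nhds (x i)) (nhds x) := by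
    have := (upd_cont i x).continuousAt (x := x i)
    simpa [ContinuousAt, Function.update_eq_self] using this
  exact hc.eventually h

lemma pd_congr_nhds {N : ℕ} (i : Fin N) {f g : (Fin N → ℝ) → ℝ} {x : Fin N → ℝ}
    (h : f =ᶠ[nhds x] g) : pd i f =ᶠ[nhds x] pd i g := by
  have := h.eventually_nhds
  exact this.mono fun y hy => pd_congr i hy

lemma lap_congr {N : ℕ} {f g : (Fin N → ℝ) → ℝ} {x : Fin N → ℝ}
    (h : f =ᶠ[nhds x] g) : lap f x = lap g x := by
  unfold lap
  refine Finset.sum_congr rfl fun i _ => pd_congr i ?_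
  exact pd_congr_nhds i h

lemma pd_eq_fderiv {N : ℕ} (i : Fin N) {f : (Fin N → ℝ) → ℝ} (hf : ContDiff ℝ (⊤ : ℕ∞) f)
    (x : Fin N → ℝ) : pd i f x = fderiv ℝ f x (Pi.single i 1) := by
  have hupd : (fun s : ℝ => Function.update x i s)
      = fun s : ℝ => Function.update x i 0 + s • (Pi.single i 1 : Fin N → ℝ) := by
    funext s; ext j
    rcases eq_or_ne j i with h | h
    · subst h; simp [Function.update_apply]
    · simp [Function.update_apply, h, Pi.single_apply]
  have hL : HasDerivAt (fun s : ℝ => Function.update x i s)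
      (Pi.single i 1 : Fin N → ℝ) (x i) := by
    rw [hupd]
    simpa using ((hasDerivAt_id (x i)).smul_const (Pi.single i (1:ℝ))).const_add
      (Function.update x i 0)
  have hx : Function.update x i (x i) = x := Function.update_eq_self i x
  have hF : HasFDerivAt f (fderiv ℝ f x) x :=
    (hf.differentiable (by simp) x).hasFDerivAt
  rw [← hx] at hF
  have h := (hF.comp_hasDerivAt (x i) hL).deriv
  rw [hx] at h
  exact h

lemma contDiff_pd {N : ℕ} (i : Fin N) {f : (Fin N → ℝ) → ℝ} (hf : ContDiff ℝ (⊤ : ℕ∞) f) :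
    ContDiff ℝ (⊤ : ℕ∞) (pd i f) := by
  have : pd i f = fun x => fderiv ℝ f x (Pi.single i 1) := funext (pd_eq_fderiv i hf)
  rw [this]
  exact (hf.fderiv_right (by exact_mod_cast le_top)).clm_apply contDiff_const

lemma contDiff_lap {N : ℕ} {f : (Fin N → ℝ) → ℝ} (hf : ContDiff ℝ (⊤ : ℕ∞) f) :
    ContDiff ℝ (⊤ : ℕ∞) (lap f) := by
  have : lap f = fun x => ∑ i, pd i (pd i f) x := rfl
  rw [this]
  exact ContDiff.sum fun i _ => contDiff_pd i (contDiff_pd i hf)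

open scoped Manifold

theorem stmt_11 (N : ℕ) (hN : 0 < N)
    (Ω ω₁ ω₂ : Set (Fin N → ℝ))
    (hΩo : IsOpen Ω) (hΩb : Bornology.IsBounded Ω)
    (hω₁ : IsOpen ω₁) (hω₂ : IsOpen ω₂)
    (h12 : closure ω₁ ⊆ ω₂) (h2Ω : closure ω₂ ⊆ Ω)
    (φ₁ : (Fin N → ℝ) → ℝ) (hφ₁ : ContDiff ℝ (⊤ : ℕ∞) φ₁)
    (hφ₁pos : ∀ x ∈ Ω, 0 < φ₁ x) (hφ₁bd : ∀ x ∈ frontier Ω, φ₁ x = 0)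
    (l₁ : ℝ) (heig : ∀ x ∈ Ω, -(lap φ₁ x) = l₁ * φ₁ x) :
    ∃ (φ a : (Fin N → ℝ) → ℝ),
      ContDiff ℝ (⊤ : ℕ∞) φ ∧ ContDiffOn ℝ (⊤ : ℕ∞) a Ω ∧
      (∀ x ∈ Ω, 0 < φ x) ∧
      (∀ x ∈ frontier Ω, φ x = 0) ∧
      (∀ x ∈ ω₁, φ x = 1) ∧
      (∀ x ∈ ω₁, pd ⟨0, hN⟩ φ x = 0) ∧
      (∀ x ∈ Ω, -(lap φ x) - a x * φ x = φ x) ∧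
      (∀ x ∈ Ω \ closure ω₂, a x = l₁ - 1) ∧
      (∃ M : ℝ, ∀ x ∈ Ω, |a x| ≤ M) := by
  -- cutoff function
  obtain ⟨f, hf0, hf1, hf01⟩ := exists_contMDiffMap_zero_one_of_isClosed (n := ⊤) (𝓘(ℝ, Fin N → ℝ))
    (isClosed_compl_iff.mpr hω₂) isClosed_closure
    (Set.disjoint_left.mpr fun x hx hx1 => hx (h12 hx1))
  set θ : (Fin N → ℝ) → ℝ := ⇑f with hθdef
  have hθs : ContDiff ℝ (⊤ : ℕ∞) θ := f.contMDiff.contDiff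
  have hθ0 : ∀ x ∉ ω₂, θ x = 0 := fun x hx => hf0 hx
  have hθ1 : ∀ x ∈ closure ω₁, θ x = 1 := fun x hx => hf1 hx
  set φ : (Fin N → ℝ) → ℝ := fun x => θ x + (1 - θ x) * φ₁ x with hφdef
  have hφs : ContDiff ℝ (⊤ : ℕ∞) φ := hθs.add ((contDiff_const.sub hθs).mul hφ₁)
  have hφpos : ∀ x ∈ Ω, 0 < φ x := by
    intro x hx
    have h01 := hf01 x
    rcases lt_or_eq_of_le h01.2 with h | h
    · have := mul_pos (sub_pos.mpr h) (hφ₁pos x hx)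
      simp only [hφdef]; nlinarith [h01.1]
    · simp [hφdef, ← hθdef, show θ x = 1 from h]
  set a : (Fin N → ℝ) → ℝ := fun x => (-(lap φ x) - φ x) / φ x with hadef
  have ha : ContDiffOn ℝ (⊤ : ℕ∞) a Ω := by
    apply ContDiffOn.div
    · exact ((contDiff_lap hφs).neg.sub hφs).contDiffOn
    · exact hφs.contDiffOn
    · exact fun x hx => (hφpos x hx).ne'
  have haval : ∀ x ∈ Ω \ closure ω₂, a x = l₁ - 1 := by
    intro x ⟨hxΩ, hx2⟩
    have hev : φ =ᶠ[nhds x] φ₁ := by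
      filter_upwards [isClosed_closure.isOpen_compl.mem_nhds hx2] with y hy
      have : θ y = 0 := hθ0 y fun h => hy (subset_closure h)
      simp [hφdef, this]
    have hlap : lap φ x = lap φ₁ x := lap_congr hev
    have hφx : φ x = φ₁ x := hev.self_of_nhds
    have h1 := heig x hxΩ
    have h2 := (hφ₁pos x hxΩ).ne'
    simp only [hadef, hlap, hφx]
    rw [h1]
    field_simp
  refine ⟨φ, a, hφs, ha, hφpos, ?_, ?_, ?_, ?_, haval, ?_⟩
  · -- boundary
    intro x hx
    have hxΩ : x ∉ Ω := fun h => (hΩo.frontier_eq ▸ hx).2 h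
    have hθx : θ x = 0 := hθ0 x fun h => hxΩ (h2Ω (subset_closure h))
    simp [hφdef, hθx, hφ₁bd x hx]
  · -- φ = 1 on ω₁
    intro x hx
    simp [hφdef, hθ1 x (subset_closure hx)]
  · -- pd = 0 on ω₁
    intro x hx
    have hev : φ =ᶠ[nhds x] (fun _ => 1) := by
      filter_upwards [hω₁.mem_nhds hx] with y hy
      simp [hφdef, hθ1 y (subset_closure hy)]
    rw [pd_congr _ hev]
    simp [pd]
  · -- PDE
    intro x hx
    have h := (hφpos x hx).ne'
    simp only [hadef]
    field_simp
    ring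
  · -- boundedness
    have hK : IsCompact (closure ω₂) := by
      refine Metric.isCompact_of_isClosed_isBounded isClosed_closure ?_
      exact (hΩb.subset (fun x hx => h2Ω (subset_closure hx))).closure
    obtain ⟨M₀, hM₀⟩ := hK.exists_bound_of_continuousOn
      ((ha.continuousOn).mono h2Ω)
    refine ⟨max M₀ |l₁ - 1|, fun x hx => ?_⟩
    by_cases hx2 : x ∈ closure ω₂
    · exact le_trans (by simpa using hM₀ x hx2) (le_max_left _ _)
    · rw [haval x ⟨hx, hx2⟩]; exact le_max_right _ _
end

section
/- Let n ≥ 2, let I ⊂ ℝ be an open interval, let U ⊂ ℝ^{n−1} be a nonempty open set, and set ω̃ := I × U ⊂ ℝⁿ with points written x = (x₁, x′). Let a₀, a₁, a₂ : ω̃ → ℝ be C² functions with a₁(x) ≠ 0 and ∂_{x₁}(a₂/a₁)(x) ≠ 0 for every x ∈ ω̃. If ∂_{x₁}( ∂_{x₁}(a₀/a₁) / ∂_{x₁}(a₂/a₁) )(x) = 0 for every x ∈ ω̃, then there exist continuous functions λ₁, λ₂ : U → ℝ such that a₀(x₁, x′) = λ₁(x′)·a₁(x₁, x′) + λ₂(x′)·a₂(x₁,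 x′) for every (x₁, x′) ∈ ω̃. -/
open Real

/-- Partial derivative in the first variable `x₁` of a function on `ℝ × ℝ^{n-1}`. -/
noncomputable def d1 {m : ℕ} (f : ℝ × (Fin m → ℝ) → ℝ) : ℝ × (Fin m → ℝ) → ℝ :=
  fun p => deriv (fun s => f (s, p.2)) p.1

lemma slice_hasDerivAt {m : ℕ} {f : ℝ × (Fin m → ℝ) → ℝ} {p : ℝ × (Fin m → ℝ)}
    (hf : DifferentiableAt ℝ f p) :
    HasDerivAt (fun s => f (s, p.2)) (fderiv ℝ f p (1, 0)) p.1 :=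
  hf.hasFDerivAt.comp_hasDerivAt p.1 ((hasDerivAt_id p.1).prodMk (hasDerivAt_const p.1 p.2))

lemma const_aux {s : Set ℝ} (ho : IsOpen s) (hc : Convex ℝ s) {g : ℝ → ℝ}
    (hg : ∀ x ∈ s, HasDerivAt g 0 x) {a b : ℝ} (ha : a ∈ s) (hb : b ∈ s) : g a = g b := by
  refine hc.is_const_of_fderivWithin_eq_zero
    (fun x hx => (hg x hx).differentiableAt.differentiableWithinAt) (fun x hx => ?_) ha hb
  rw [fderivWithin_of_isOpen ho hx, (hg x hx).hasFDerivAt.fderiv]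
  ext; simp

theorem stmt_18 (n : ℕ) (hn : 2 ≤ n)
    (I : Set ℝ) (hIopen : IsOpen I) (hIinterval : I.OrdConnected)
    (U : Set (Fin (n - 1) → ℝ)) (hUopen : IsOpen U) (hUne : U.Nonempty)
    (a₀ a₁ a₂ : ℝ × (Fin (n - 1) → ℝ) → ℝ)
    (ha₀ : ContDiffOn ℝ 2 a₀ (I ×ˢ U)) (ha₁ : ContDiffOn ℝ 2 a₁ (I ×ˢ U))
    (ha₂ : ContDiffOn ℝ 2 a₂ (I ×ˢ U))
    (ha₁ne : ∀ p ∈ I ×ˢ U, a₁ p ≠ 0)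
    (ha₂ne : ∀ p ∈ I ×ˢ U, d1 (fun q => a₂ q / a₁ q) p ≠ 0)
    (hder : ∀ p ∈ I ×ˢ U,
      d1 (fun q => d1 (fun r => a₀ r / a₁ r) q / d1 (fun r => a₂ r / a₁ r) q) p = 0) :
    ∃ lam₁ lam₂ : (Fin (n - 1) → ℝ) → ℝ,
      ContinuousOn lam₁ U ∧ ContinuousOn lam₂ U ∧
      ∀ p ∈ I ×ˢ U, a₀ p = lam₁ p.2 * a₁ p + lam₂ p.2 * a₂ p := by
  by_cases hI : I.Nonempty
  · obtain ⟨t₀, ht₀⟩ := hI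
    set Ω := I ×ˢ U with hΩdef
    have hΩ : IsOpen Ω := hIopen.prod hUopen
    have hIconv : Convex ℝ I := convex_iff_ordConnected.2 hIinterval
    set f₀ : ℝ × (Fin (n - 1) → ℝ) → ℝ := fun q => a₀ q / a₁ q with hf₀def
    set f₂ : ℝ × (Fin (n - 1) → ℝ) → ℝ := fun q => a₂ q / a₁ q with hf₂def
    have hf₀ : ContDiffOn ℝ 2 f₀ Ω := ha₀.div ha₁ ha₁ne
    have hf₂ : ContDiffOn ℝ 2 f₂ Ω := ha₂.div ha₁ ha₁ne
    have hd₀ : ∀ p ∈ Ω, DifferentiableAt ℝ f₀ p := fun p hp =>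
      (hf₀.contDiffAt (hΩ.mem_nhds hp)).differentiableAt two_ne_zero
    have hd₂ : ∀ p ∈ Ω, DifferentiableAt ℝ f₂ p := fun p hp =>
      (hf₂.contDiffAt (hΩ.mem_nhds hp)).differentiableAt two_ne_zero
    set F₀ : ℝ × (Fin (n - 1) → ℝ) → ℝ := fun p => fderiv ℝ f₀ p (1, 0) with hF₀def
    set F₂ : ℝ × (Fin (n - 1) → ℝ) → ℝ := fun p => fderiv ℝ f₂ p (1, 0) with hF₂def
    have hD₀ : ∀ p ∈ Ω, d1 f₀ p = F₀ p := fun p hp => (slice_hasDerivAt (hd₀ p hp)).deriv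
    have hD₂ : ∀ p ∈ Ω, d1 f₂ p = F₂ p := fun p hp => (slice_hasDerivAt (hd₂ p hp)).deriv
    have hF₂ne : ∀ p ∈ Ω, F₂ p ≠ 0 := fun p hp => (hD₂ p hp) ▸ ha₂ne p hp
    have hF₀c : ContDiffOn ℝ 1 F₀ Ω :=
      (hf₀.fderiv_of_isOpen hΩ le_rfl).clm_apply contDiffOn_const
    have hF₂c : ContDiffOn ℝ 1 F₂ Ω :=
      (hf₂.fderiv_of_isOpen hΩ le_rfl).clm_apply contDiffOn_const
    set Q : ℝ × (Fin (n - 1) → ℝ) → ℝ := fun p => F₀ p / F₂ p with hQdef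
    have hQc : ContDiffOn ℝ 1 Q Ω := hF₀c.div hF₂c hF₂ne
    have hQd : ∀ p ∈ Ω, DifferentiableAt ℝ Q p := fun p hp =>
      (hQc.contDiffAt (hΩ.mem_nhds hp)).differentiableAt one_ne_zero
    -- Q agrees with the d1-quotient near any point of Ω
    have hQeq : ∀ p ∈ Ω, (fun q => d1 f₀ q / d1 f₂ q) p = Q p := fun p hp => by
      simp only [hQdef, hD₀ p hp, hD₂ p hp]
    -- slices of Q have zero derivative on I
    have hQslice : ∀ x' ∈ U, ∀ s ∈ I, HasDerivAt (fun t => Q (t, x')) 0 s := by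
      intro x' hx' s hs
      have hp : (s, x') ∈ Ω := ⟨hs, hx'⟩
      have hdiff : HasDerivAt (fun t => Q (t, x')) (fderiv ℝ Q (s, x') (1, 0)) s :=
        slice_hasDerivAt (hQd _ hp)
      -- the slices of Q and of the d1-quotient agree near s
      have hnn : (fun t => Q (t, x')) =ᶠ[nhds s]
          (fun t => d1 f₀ (t, x') / d1 f₂ (t, x')) := by
        have : ∀ᶠ t in nhds s, (t, x') ∈ Ω := by
          have : Continuous (fun t : ℝ => (t, x')) := continuous_id.prodMk continuous_const
          exact this.continuousAt.preimage_mem_nhds (hΩ.mem_nhds hp)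
        filter_upwards [this] with t ht
        exact (hQeq _ ht).symm
      have h0 : deriv (fun t => Q (t, x')) s = 0 := by
        rw [Filter.EventuallyEq.deriv_eq hnn]
        exact hder (s, x') hp
      rw [hdiff.deriv] at h0; rw [← h0]; exact hdiff
    set lam₂ : (Fin (n - 1) → ℝ) → ℝ := fun x' => Q (t₀, x') with hlam₂def
    have hQconst : ∀ p ∈ Ω, Q p = lam₂ p.2 := by
      rintro ⟨s, x'⟩ ⟨hs, hx'⟩
      exact const_aux hIopen hIconv (hQslice x' hx') hs ht₀
    -- second step: (f₀ - lam₂ f₂) slices are constant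
    set lam₁ : (Fin (n - 1) → ℝ) → ℝ := fun x' => f₀ (t₀, x') - lam₂ x' * f₂ (t₀, x')
      with hlam₁def
    have hkey : ∀ p ∈ Ω, f₀ p = lam₁ p.2 + lam₂ p.2 * f₂ p := by
      rintro ⟨s, x'⟩ ⟨hs, hx'⟩
      have hconst : f₀ (s, x') - lam₂ x' * f₂ (s, x')
          = f₀ (t₀, x') - lam₂ x' * f₂ (t₀, x') := by
        refine const_aux hIopen hIconv (g := fun t => f₀ (t, x') - lam₂ x' * f₂ (t, x'))
          (fun t ht => ?_) hs ht₀
        have hp : (t, x') ∈ Ω := ⟨ht, hx'⟩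
        have h0 := slice_hasDerivAt (hd₀ _ hp)
        have h2 := (slice_hasDerivAt (hd₂ _ hp)).const_mul (lam₂ x')
        have := h0.sub h2
        have hval : F₀ (t, x') - lam₂ x' * F₂ (t, x') = 0 := by
          have hq : F₀ (t, x') / F₂ (t, x') = lam₂ x' := hQconst (t, x') hp
          have hne := hF₂ne (t, x') hp
          rw [div_eq_iff hne] at hq
          linarith
        have hval' : fderiv ℝ f₀ (t, x') (1, 0) - lam₂ x' * fderiv ℝ f₂ (t, x') (1, 0) = 0 := hval
        rw [hval'] at this; exact this
      simp only [hlam₁def]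
      linarith [hconst]
    -- continuity
    have hcontQ : ContinuousOn Q Ω := hQc.continuousOn
    have hmap : ∀ x' ∈ U, (t₀, x') ∈ Ω := fun x' hx' => ⟨ht₀, hx'⟩
    have hslicecont : Continuous (fun x' : Fin (n - 1) → ℝ => ((t₀, x') : ℝ × (Fin (n-1) → ℝ))) :=
      continuous_const.prodMk continuous_id
    have hlam₂cont : ContinuousOn lam₂ U :=
      hcontQ.comp hslicecont.continuousOn hmap
    have hf₀cont : ContinuousOn f₀ Ω := hf₀.continuousOn
    have hf₂cont : ContinuousOn f₂ Ω := hf₂.continuousOn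
    have hlam₁cont : ContinuousOn lam₁ U := by
      exact (hf₀cont.comp hslicecont.continuousOn hmap).sub
        (hlam₂cont.mul (hf₂cont.comp hslicecont.continuousOn hmap))
    refine ⟨lam₁, lam₂, hlam₁cont, hlam₂cont, ?_⟩
    intro p hp
    have h := hkey p hp
    have h1 := ha₁ne p hp
    simp only [hf₀def, hf₂def] at h
    field_simp at h
    linarith [h]
  · refine ⟨0, 0, continuousOn_const, continuousOn_const, ?_⟩
    rintro ⟨s, x'⟩ ⟨hs, -⟩
    exact absurd ⟨s, hs⟩ hI
end

section
/- Let n ≥ 2, let I ⊂ ℝ be an open interval, let U ⊂ ℝ^{n−1} be a nonempty open set, and set ω̃ := I × U ⊂ ℝⁿ with points written x = (x₁, x′). Let a₀, a₁, a₂, a₃ : ω̃ → ℝ be C³ functions such that for every x ∈ ω̃: a₁(x) ≠ 0, ∂_{x₁}(a₂/a₁)(x) ≠ 0, and ∂_{x₁}( ∂_{x₁}(a₃/a₁) / ∂_{x₁}(a₂/a₁) )(x) ≠ 0. If ∂_{x₁}( ∂_{x₁}( ∂_{x₁}(a₀/a₁) / ∂_{x₁}(a₂/a₁) ) / ∂_{x₁}(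 ∂_{x₁}(a₃/a₁) / ∂_{x₁}(a₂/a₁) ) )(x) = 0 for every x ∈ ω̃, then there exist continuous functions λ₁, λ₂, λ₃ : U → ℝ such that a₀(x₁, x′) = λ₁(x′)·a₁(x₁, x′) + λ₂(x′)·a₂(x₁, x′) + λ₃(x′)·a₃(x₁, x′) for every (x₁, x′) ∈ ω̃. -/
open Real

lemma d1_eq_fderiv {m : ℕ} {f : ℝ × (Fin m → ℝ) → ℝ} {p : ℝ × (Fin m → ℝ)}
    (hf : DifferentiableAt ℝ f p) : d1 f p = fderiv ℝ f p (1, 0) := by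
  have h : HasDerivAt (fun s => f (s, p.2)) (fderiv ℝ f p (1, 0)) p.1 := by
    have := hf.hasFDerivAt.comp_hasDerivAt p.1
      ((hasDerivAt_id p.1).prodMk (hasDerivAt_const p.1 p.2))
    simp at this; exact this
  exact h.deriv

lemma hasDerivAt_slice {m : ℕ} {f : ℝ × (Fin m → ℝ) → ℝ} {p : ℝ × (Fin m → ℝ)}
    (hf : DifferentiableAt ℝ f p) :
    HasDerivAt (fun s => f (s, p.2)) (d1 f p) p.1 := by
  have h : HasDerivAt (fun s => f (s, p.2)) (fderiv ℝ f p (1, 0)) p.1 := by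
    have := hf.hasFDerivAt.comp_hasDerivAt p.1
      ((hasDerivAt_id p.1).prodMk (hasDerivAt_const p.1 p.2))
    simp at this; exact this
  rw [d1_eq_fderiv hf]; exact h

lemma d1_contDiffOn {m : ℕ} {k : WithTop ℕ∞} {S : Set (ℝ × (Fin m → ℝ))} (hS : IsOpen S)
    {f : ℝ × (Fin m → ℝ) → ℝ} (hf : ContDiffOn ℝ (k + 1) f S) :
    ContDiffOn ℝ k (d1 f) S := by
  have hfd : ContDiffOn ℝ k (fun p => fderiv ℝ f p) S := hf.fderiv_of_isOpen hS le_rfl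
  have h2 : ContDiffOn ℝ k (fun p => fderiv ℝ f p (1, 0)) S :=
    hfd.clm_apply contDiffOn_const
  refine h2.congr fun p hp => ?_
  have hd : DifferentiableAt ℝ f p :=
    ((hf.differentiableOn (by simp)) p hp).differentiableAt (hS.mem_nhds hp)
  exact d1_eq_fderiv hd

/-- A function on a product whose slice derivatives all vanish is constant in the
first variable along a convex open `I`. -/
lemma const_slice {m : ℕ} {I : Set ℝ} {U : Set (Fin m → ℝ)} (hIc : Convex ℝ I)
    (hIo : IsOpen I) {f : ℝ × (Fin m → ℝ) → ℝ}
    (h0 : ∀ p ∈ I ×ˢ U, HasDerivAt (fun s => f (s, p.2)) 0 p.1)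
    {p : ℝ × (Fin m → ℝ)} (hp : p ∈ I ×ˢ U) {t : ℝ} (ht : t ∈ I) :
    f p = f (t, p.2) := by
  obtain ⟨hp1, hp2⟩ := hp
  have key : ∀ s ∈ I, HasDerivAt (fun s => f (s, p.2)) 0 s := fun s hs =>
    h0 (s, p.2) ⟨hs, hp2⟩
  have hdiff : DifferentiableOn ℝ (fun s => f (s, p.2)) I := fun s hs =>
    (key s hs).differentiableAt.differentiableWithinAt
  have hfd : ∀ s ∈ I, fderivWithin ℝ (fun s => f (s, p.2)) I s = 0 := by
    intro s hs
    rw [fderivWithin_of_isOpen hIo hs, ((key s hs).hasFDerivAt).fderiv]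
    exact ContinuousLinearMap.ext fun u => by simp
  exact hIc.is_const_of_fderivWithin_eq_zero hdiff hfd hp1 ht

theorem stmt_19 (n : ℕ) (hn : 2 ≤ n)
    (I : Set ℝ) (hIopen : IsOpen I) (hIinterval : I.OrdConnected)
    (U : Set (Fin (n - 1) → ℝ)) (hUopen : IsOpen U) (hUne : U.Nonempty)
    (a₀ a₁ a₂ a₃ : ℝ × (Fin (n - 1) → ℝ) → ℝ)
    (ha₀ : ContDiffOn ℝ 3 a₀ (I ×ˢ U)) (ha₁ : ContDiffOn ℝ 3 a₁ (I ×ˢ U))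
    (ha₂ : ContDiffOn ℝ 3 a₂ (I ×ˢ U)) (ha₃ : ContDiffOn ℝ 3 a₃ (I ×ˢ U))
    (ha₁ne : ∀ p ∈ I ×ˢ U, a₁ p ≠ 0)
    (ha₂ne : ∀ p ∈ I ×ˢ U, d1 (fun q => a₂ q / a₁ q) p ≠ 0)
    (ha₃ne : ∀ p ∈ I ×ˢ U,
      d1 (fun q => d1 (fun r => a₃ r / a₁ r) q / d1 (fun r => a₂ r / a₁ r) q) p ≠ 0)
    (hder : ∀ p ∈ I ×ˢ U,
      d1 (fun q =>
        d1 (fun r => d1 (fun w => a₀ w / a₁ w) r / d1 (fun w => a₂ w / a₁ w) r) q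
          / d1 (fun r => d1 (fun w => a₃ w / a₁ w) r / d1 (fun w => a₂ w / a₁ w) r) q) p
        = 0) :
    ∃ lam₁ lam₂ lam₃ : (Fin (n - 1) → ℝ) → ℝ,
      ContinuousOn lam₁ U ∧ ContinuousOn lam₂ U ∧ ContinuousOn lam₃ U ∧
      ∀ p ∈ I ×ˢ U, a₀ p = lam₁ p.2 * a₁ p + lam₂ p.2 * a₂ p + lam₃ p.2 * a₃ p := by
  rcases I.eq_empty_or_nonempty with hI | ⟨t₀, ht₀⟩
  · refine ⟨0, 0, 0, continuousOn_const, continuousOn_const, continuousOn_const, ?_⟩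
    intro p hp
    rw [hI] at hp
    simp at hp
  have hSopen : IsOpen (I ×ˢ U) := hIopen.prod hUopen
  have hIc : Convex ℝ I := hIinterval.convex
  set b₀ := fun w => a₀ w / a₁ w with hb₀
  set b₂ := fun w => a₂ w / a₁ w with hb₂
  set b₃ := fun w => a₃ w / a₁ w with hb₃
  have h32 : ((2 : WithTop ℕ∞) + 1) = 3 := by norm_num
  have h21 : ((1 : WithTop ℕ∞) + 1) = 2 := by norm_num
  have hb₀c : ContDiffOn ℝ 3 b₀ (I ×ˢ U) := ha₀.div ha₁ ha₁ne
  have hb₂c : ContDiffOn ℝ 3 b₂ (I ×ˢ U) := ha₂.div ha₁ ha₁ne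
  have hb₃c : ContDiffOn ℝ 3 b₃ (I ×ˢ U) := ha₃.div ha₁ ha₁ne
  have hd1b₀ : ContDiffOn ℝ 2 (d1 b₀) (I ×ˢ U) :=
    d1_contDiffOn hSopen (by rw [h32]; exact hb₀c)
  have hd1b₂ : ContDiffOn ℝ 2 (d1 b₂) (I ×ˢ U) :=
    d1_contDiffOn hSopen (by rw [h32]; exact hb₂c)
  have hd1b₃ : ContDiffOn ℝ 2 (d1 b₃) (I ×ˢ U) :=
    d1_contDiffOn hSopen (by rw [h32]; exact hb₃c)
  set c₀ := fun r => d1 b₀ r / d1 b₂ r with hc₀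
  set c₃ := fun r => d1 b₃ r / d1 b₂ r with hc₃
  have hc₀c : ContDiffOn ℝ 2 c₀ (I ×ˢ U) := hd1b₀.div hd1b₂ ha₂ne
  have hc₃c : ContDiffOn ℝ 2 c₃ (I ×ˢ U) := hd1b₃.div hd1b₂ ha₂ne
  have hd1c₀ : ContDiffOn ℝ 1 (d1 c₀) (I ×ˢ U) :=
    d1_contDiffOn hSopen (by rw [h21]; exact hc₀c)
  have hd1c₃ : ContDiffOn ℝ 1 (d1 c₃) (I ×ˢ U) :=
    d1_contDiffOn hSopen (by rw [h21]; exact hc₃c)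
  set e := fun q => d1 c₀ q / d1 c₃ q with he
  have hec : ContDiffOn ℝ 1 e (I ×ˢ U) := hd1c₀.div hd1c₃ ha₃ne
  -- differentiability of relevant functions at interior points
  have diffAt : ∀ g : ℝ × (Fin (n - 1) → ℝ) → ℝ, ContDiffOn ℝ 1 g (I ×ˢ U) →
      ∀ p ∈ I ×ˢ U, DifferentiableAt ℝ g p := fun g hg p hp =>
    ((hg.differentiableOn one_ne_zero) p hp).differentiableAt (hSopen.mem_nhds hp)
  have hone : (1 : WithTop ℕ∞) ≤ 2 := by norm_num
  have hone3 : (1 : WithTop ℕ∞) ≤ 3 := by norm_num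
  -- Step A : e is constant in x₁
  have stepA : ∀ p ∈ I ×ˢ U, e p = e (t₀, p.2) := by
    intro p hp
    refine const_slice hIc hIopen ?_ hp ht₀
    intro q hq
    have h := hasDerivAt_slice (diffAt e hec q hq)
    rw [hder q hq] at h
    exact h
  have key1 : ∀ p ∈ I ×ˢ U, d1 c₀ p = e (t₀, p.2) * d1 c₃ p := by
    intro p hp
    have h3 := ha₃ne p hp
    have hA : d1 c₀ p / d1 c₃ p = e (t₀, p.2) := stepA p hp
    rw [← hA]
    exact (div_mul_cancel₀ _ h3).symm
  -- Step B : c₀ - λ₃ c₃ is constant in x₁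
  set G := fun p : ℝ × (Fin (n - 1) → ℝ) => c₀ p - e (t₀, p.2) * c₃ p with hG
  have stepB : ∀ p ∈ I ×ˢ U, G p = G (t₀, p.2) := by
    intro p hp
    refine const_slice hIc hIopen ?_ hp ht₀
    intro q hq
    have h1 := hasDerivAt_slice (diffAt c₀ (hc₀c.of_le hone) q hq)
    have h2 := hasDerivAt_slice (diffAt c₃ (hc₃c.of_le hone) q hq)
    have htot := h1.sub (HasDerivAt.const_mul (e (t₀, q.2)) h2)
    have hval : d1 c₀ q - e (t₀, q.2) * d1 c₃ q = 0 := by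
      rw [key1 q hq]; ring
    rw [hval] at htot
    exact htot
  have key2 : ∀ p ∈ I ×ˢ U,
      d1 b₀ p = e (t₀, p.2) * d1 b₃ p + G (t₀, p.2) * d1 b₂ p := by
    intro p hp
    have h2 := ha₂ne p hp
    have hB : d1 b₀ p / d1 b₂ p - e (t₀, p.2) * (d1 b₃ p / d1 b₂ p) = G (t₀, p.2) :=
      stepB p hp
    field_simp at hB
    linear_combination hB
  -- Step C : b₀ - λ₃ b₃ - λ₂ b₂ is constant in x₁
  set H := fun p : ℝ × (Fin (n - 1) → ℝ) =>
    b₀ p - e (t₀, p.2) * b₃ p - G (t₀, p.2) * b₂ p with hH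
  have stepC : ∀ p ∈ I ×ˢ U, H p = H (t₀, p.2) := by
    intro p hp
    refine const_slice hIc hIopen ?_ hp ht₀
    intro q hq
    have h0 := hasDerivAt_slice (diffAt b₀ (hb₀c.of_le hone3) q hq)
    have h3 := hasDerivAt_slice (diffAt b₃ (hb₃c.of_le hone3) q hq)
    have h2 := hasDerivAt_slice (diffAt b₂ (hb₂c.of_le hone3) q hq)
    have htot := (h0.sub (HasDerivAt.const_mul (e (t₀, q.2)) h3)).sub
      (HasDerivAt.const_mul (G (t₀, q.2)) h2)
    have hval : d1 b₀ q - e (t₀, q.2) * d1 b₃ q - G (t₀, q.2) * d1 b₂ q = 0 := by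
      rw [key2 q hq]; ring
    rw [hval] at htot
    exact htot
  -- the three multipliers
  refine ⟨fun x' => H (t₀, x'), fun x' => G (t₀, x'), fun x' => e (t₀, x'), ?_, ?_, ?_, ?_⟩
  · have hι : ContinuousOn (fun x' : Fin (n - 1) → ℝ => ((t₀, x') : ℝ × (Fin (n - 1) → ℝ))) U :=
      (continuous_const.prodMk continuous_id).continuousOn
    have hmaps : Set.MapsTo (fun x' : Fin (n - 1) → ℝ => ((t₀, x') : ℝ × (Fin (n - 1) → ℝ)))
        U (I ×ˢ U) := fun x' hx' => ⟨ht₀, hx'⟩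
    have hHcont : ContinuousOn H (I ×ˢ U) := by
      have hcomp : ContinuousOn (fun p : ℝ × (Fin (n - 1) → ℝ) => e (t₀, p.2)) (I ×ˢ U) := by
        refine hec.continuousOn.comp ((continuous_const.prodMk continuous_snd).continuousOn) ?_
        exact fun p hp => ⟨ht₀, hp.2⟩
      have hGcomp : ContinuousOn (fun p : ℝ × (Fin (n - 1) → ℝ) => G (t₀, p.2)) (I ×ˢ U) := by
        have hGcont : ContinuousOn G (I ×ˢ U) := by
          exact ((hc₀c.continuousOn).sub (hcomp.mul hc₃c.continuousOn))
        refine hGcont.comp ((continuous_const.prodMk continuous_snd).continuousOn) ?_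
        exact fun p hp => ⟨ht₀, hp.2⟩
      exact (hb₀c.continuousOn.sub (hcomp.mul hb₃c.continuousOn)).sub
        (hGcomp.mul hb₂c.continuousOn)
    exact hHcont.comp hι hmaps
  · have hι : ContinuousOn (fun x' : Fin (n - 1) → ℝ => ((t₀, x') : ℝ × (Fin (n - 1) → ℝ))) U :=
      (continuous_const.prodMk continuous_id).continuousOn
    have hmaps : Set.MapsTo (fun x' : Fin (n - 1) → ℝ => ((t₀, x') : ℝ × (Fin (n - 1) → ℝ)))
        U (I ×ˢ U) := fun x' hx' => ⟨ht₀, hx'⟩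
    have hcomp : ContinuousOn (fun p : ℝ × (Fin (n - 1) → ℝ) => e (t₀, p.2)) (I ×ˢ U) := by
      refine hec.continuousOn.comp ((continuous_const.prodMk continuous_snd).continuousOn) ?_
      exact fun p hp => ⟨ht₀, hp.2⟩
    have hGcont : ContinuousOn G (I ×ˢ U) :=
      (hc₀c.continuousOn).sub (hcomp.mul hc₃c.continuousOn)
    exact hGcont.comp hι hmaps
  · have hι : ContinuousOn (fun x' : Fin (n - 1) → ℝ => ((t₀, x') : ℝ × (Fin (n - 1) → ℝ))) U :=
      (continuous_const.prodMk continuous_id).continuousOn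
    have hmaps : Set.MapsTo (fun x' : Fin (n - 1) → ℝ => ((t₀, x') : ℝ × (Fin (n - 1) → ℝ)))
        U (I ×ˢ U) := fun x' hx' => ⟨ht₀, hx'⟩
    exact hec.continuousOn.comp hι hmaps
  · intro p hp
    have h1 := ha₁ne p hp
    have hCp : a₀ p / a₁ p - e (t₀, p.2) * (a₃ p / a₁ p) - G (t₀, p.2) * (a₂ p / a₁ p)
        = H (t₀, p.2) := stepC p hp
    field_simp at hCp
    show a₀ p = H (t₀, p.2) * a₁ p + G (t₀, p.2) * a₂ p + e (t₀, p.2) * a₃ p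
    linear_combination hCp
end
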